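/- arXiv:1511.07784 — 3 statements merged into one kernel-verified Lean document; each statement's English description precedes it below -/
import Mathlib

section
/- Let t ≥ 3 be an odd integer, let n be odd, let D be an adjusted t-decomposition of K_n, and let H be an undirected graph on n vertices with maximum degree at most d. Then the number of atypical labeled copies of H in K_n (with respect to D) is at most 11·d³·t⁴·(n−1)!. -/
open scoped Classical

/-- The edge set of the complete graph on a vertex subset `s` of `Fin n`:
all non-diagonal unordered pairs with both endpoints in `s`. -/
noncomputable def cliqueEdges {n : ℕ} (s : Finset (Fin n)) : Finset (Sym2 (Fin n)) :=
  Finset.univ.filter fun e => ¬ e.IsDiag ∧ ∀ x ∈ e, x ∈ s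

/-- A set of edges of `K_n` is a copy of `K_m` if it is the set of all pairs
of some `m`-element vertex set. -/
def IsKClique {n : ℕ} (m : ℕ) (P : Finset (Sym2 (Fin n))) : Prop :=
  ∃ s : Finset (Fin n), s.card = m ∧ P = cliqueEdges s

/-- A set of edges of `K_n` is a cycle of length 4. -/
def IsC4 {n : ℕ} (P : Finset (Sym2 (Fin n))) : Prop :=
  ∃ a b c d : Fin n, [a, b, c, d].Nodup ∧
    P = {s(a, b), s(b, c), s(c, d), s(d, a)}

/-- A decomposition of `K_n`: a family of (nonempty, loopless) edge sets such
that every edge of `K_n` lies in exactly one member. -/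
def IsDecompKn (n : ℕ) (D : Finset (Finset (Sym2 (Fin n)))) : Prop :=
  (∀ P ∈ D, P.Nonempty ∧ ∀ e ∈ P, ¬ e.IsDiag) ∧
  (∀ e : Sym2 (Fin n), ¬ e.IsDiag → ∃! P, P ∈ D ∧ e ∈ P)

/-- An adjusted `t`-decomposition of `K_n` (Definition 2.4): a decomposition whose
members are copies of `K_t`, except for at most `n(t-3)/6` triangles, at most `t-3`
cycles of length 4 and at most `t-1` copies of `K_{2t-1}`, with the non-`K_t`
members together forming a graph `B` of maximum degree at most `3t-5`. -/
noncomputable def IsAdjustedDecomp (t n : ℕ) (D : Finset (Finset (Sym2 (Fin n)))) : Prop :=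
  IsDecompKn n D ∧
  (∀ P ∈ D, IsKClique t P ∨ IsKClique 3 P ∨ IsC4 P ∨ IsKClique (2 * t - 1) P) ∧
  (∀ v : Fin n,
    (((D.filter fun P => ¬ IsKClique t P).biUnion id).filter fun e => v ∈ e).card
      ≤ 3 * t - 5) ∧
  (D.filter fun P => ¬ IsKClique t P ∧ IsKClique 3 P).card * 6 ≤ n * (t - 3) ∧
  (D.filter fun P => ¬ IsKClique t P ∧ IsC4 P).card ≤ t - 3 ∧
  (D.filter fun P => ¬ IsKClique t P ∧ IsKClique (2 * t - 1) P).card ≤ t - 1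

/-- A labeled copy (a bijection `π` of `Fin n`) of the graph `H` is *atypical* with
respect to the adjusted `t`-decomposition `D` if some non-`K_t` member of `D` contains at
least two edges of the copy, or some `K_t` member of `D` contains three edges of the copy
not inducing a triangle. -/
def Atypical {n : ℕ} (t : ℕ) (D : Finset (Finset (Sym2 (Fin n))))
    (H : SimpleGraph (Fin n)) (π : Equiv.Perm (Fin n)) : Prop :=
  (∃ P ∈ D, ¬ IsKClique t P ∧
    ∃ e ∈ H.edgeSet, ∃ f ∈ H.edgeSet, e ≠ f ∧
      Sym2.map π e ∈ P ∧ Sym2.map π f ∈ P) ∨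
  (∃ P ∈ D, IsKClique t P ∧
    ∃ e ∈ H.edgeSet, ∃ f ∈ H.edgeSet, ∃ g ∈ H.edgeSet,
      e ≠ f ∧ e ≠ g ∧ f ≠ g ∧
      Sym2.map π e ∈ P ∧ Sym2.map π f ∈ P ∧ Sym2.map π g ∈ P ∧
      ¬ ∃ x y z : Fin n, e = s(x, y) ∧ f = s(y, z) ∧ g = s(x, z))


lemma card_agree_le (n k : ℕ) (x u : Fin k → Fin n) :
    ((Finset.univ : Finset (Equiv.Perm (Fin n))).filter
      fun π => Function.Injective x ∧ ∀ j, π (x j) = u j).card ≤ (n - k).factorial := by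
  classical
  by_cases hx : Function.Injective x
  · by_cases hu : Function.Injective u
    · set S : Finset (Fin n) := Finset.univ.image x with hSdef
      set T : Finset (Fin n) := Finset.univ.image u with hTdef
      have hS : S.card = k := by
        rw [hSdef, Finset.card_image_of_injective _ hx, Finset.card_univ, Fintype.card_fin]
      have hT : T.card = k := by
        rw [hTdef, Finset.card_image_of_injective _ hu, Finset.card_univ, Fintype.card_fin]
      set Q : Finset (Equiv.Perm (Fin n)) := (Finset.univ.filter
        fun π => Function.Injective x ∧ ∀ j, π (x j) = u j) with hQdef
      have hmem : ∀ (π : {π : Equiv.Perm (Fin n) // π ∈ Q}) (v : (Sᶜ : Finset (Fin n))),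
          π.1 v.1 ∈ (Tᶜ : Finset (Fin n)) := by
        rintro ⟨π, hπ⟩ ⟨v, hv⟩
        rw [hQdef, Finset.mem_filter] at hπ
        obtain ⟨-, -, hagree⟩ := hπ
        simp only [Finset.mem_compl, hTdef, Finset.mem_image, Finset.mem_univ, true_and]
        rintro ⟨j, hj⟩
        have : π v = π (x j) := by rw [hagree j, hj]
        have hvx : v = x j := π.injective this
        have : v ∈ S := by
          rw [hSdef]; exact Finset.mem_image.mpr ⟨j, Finset.mem_univ _, hvx.symm⟩
        exact absurd this (Finset.mem_compl.mp hv)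
      have key : Q.card ≤ Fintype.card ((Sᶜ : Finset (Fin n)) ↪ (Tᶜ : Finset (Fin n))) := by
        rw [← Fintype.card_coe]
        refine Fintype.card_le_of_injective (fun π =>
          ⟨fun v => ⟨π.1 v.1, hmem π v⟩,
            fun a b hab => Subtype.ext (π.1.injective (congrArg Subtype.val hab))⟩) ?_
        intro π1 π2 h
        apply Subtype.ext
        apply Equiv.ext
        intro v
        by_cases hv : v ∈ S
        · rw [hSdef] at hv
          obtain ⟨j, -, rfl⟩ := Finset.mem_image.mp hv
          have h1' : π1.1 ∈ Q := π1.2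
          have h2' : π2.1 ∈ Q := π2.2
          simp only [hQdef, Finset.mem_filter] at h1' h2'
          rw [h1'.2.2 j, h2'.2.2 j]
        · have := congrFun (congrArg (fun e => e.toFun) h) ⟨v, Finset.mem_compl.mpr hv⟩
          exact congrArg Subtype.val this
      refine key.trans ?_
      rw [Fintype.card_embedding_eq, Fintype.card_coe, Fintype.card_coe,
        Finset.card_compl, Finset.card_compl, Fintype.card_fin, hS, hT,
        Nat.descFactorial_self]
    · obtain ⟨i, j, hij, hne⟩ : ∃ i j, u i = u j ∧ i ≠ j := by
        simp only [Function.Injective, not_forall] at hu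
        obtain ⟨i, j, h1, h2⟩ := hu
        exact ⟨i, j, h1, h2⟩
      have : ((Finset.univ : Finset (Equiv.Perm (Fin n))).filter
          fun π => Function.Injective x ∧ ∀ j, π (x j) = u j) = ∅ := by
        apply Finset.filter_false_of_mem
        rintro π - ⟨hinj, hagree⟩
        have : π (x i) = π (x j) := by rw [hagree i, hagree j, hij]
        exact hne (hinj (π.injective this))
      rw [this]; simp
  · have : ((Finset.univ : Finset (Equiv.Perm (Fin n))).filter
        fun π => Function.Injective x ∧ ∀ j, π (x j) = u j) = ∅ := by
      apply Finset.filter_false_of_mem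
      rintro π - ⟨hinj, -⟩
      exact hx hinj
    rw [this]; simp

lemma cover_le {n k : ℕ} {ι : Type} (I : Finset ι) (xt ut : ι → Fin k → Fin n)
    (S : Equiv.Perm (Fin n) → Prop)
    (hS : ∀ π, S π → ∃ i ∈ I, Function.Injective (xt i) ∧ ∀ j, π (xt i j) = ut i j) :
    ((Finset.univ : Finset (Equiv.Perm (Fin n))).filter S).card ≤ I.card * (n - k).factorial := by
  classical
  have hsub : ((Finset.univ : Finset (Equiv.Perm (Fin n))).filter S)
      ⊆ I.biUnion fun i => Finset.univ.filter
        fun π => Function.Injective (xt i) ∧ ∀ j, π (xt i j) = ut i j := by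
    intro π hπ
    obtain ⟨i, hi, h1, h2⟩ := hS π (Finset.mem_filter.mp hπ).2
    exact Finset.mem_biUnion.mpr ⟨i, hi, Finset.mem_filter.mpr ⟨Finset.mem_univ _, h1, h2⟩⟩
  calc ((Finset.univ : Finset (Equiv.Perm (Fin n))).filter S).card
      ≤ _ := Finset.card_le_card hsub
    _ ≤ ∑ i ∈ I, ((Finset.univ : Finset (Equiv.Perm (Fin n))).filter
        fun π => Function.Injective (xt i) ∧ ∀ j, π (xt i j) = ut i j).card :=
        Finset.card_biUnion_le
    _ ≤ ∑ _i ∈ I, (n - k).factorial :=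
        Finset.sum_le_sum fun i _ => card_agree_le n k (xt i) (ut i)
    _ = I.card * (n - k).factorial := by rw [Finset.sum_const, smul_eq_mul]

open Finset in
lemma sig_le {α β : Type*} (s : Finset α) (t : α → Finset β) (M m : ℕ)
    (hs : s.card ≤ M) (ht : ∀ a ∈ s, (t a).card ≤ m) : (s.sigma t).card ≤ M * m := by
  rw [Finset.card_sigma]
  calc ∑ a ∈ s, (t a).card ≤ s.card • m := Finset.sum_le_card_nsmul s _ m ht
    _ = s.card * m := by rw [smul_eq_mul]
    _ ≤ M * m := Nat.mul_le_mul_right m hs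

lemma prod_le {α β : Type*} (s : Finset α) (t : Finset β) (M m : ℕ)
    (hs : s.card ≤ M) (ht : t.card ≤ m) : (s ×ˢ t).card ≤ M * m := by
  rw [Finset.card_product]; exact Nat.mul_le_mul hs ht

lemma degle {n d : ℕ} {H : SimpleGraph (Fin n)}
    (hH : ∀ v : Fin n, (H.neighborSet v).ncard ≤ d) (v : Fin n) :
    (Finset.univ.filter (H.Adj v)).card ≤ d := by
  classical
  have h1 : (H.neighborSet v).ncard = (Finset.univ.filter (H.Adj v)).card := by
    rw [Set.ncard_eq_toFinset_card']
    congr 1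
    ext w
    rw [Set.mem_toFinset]
    simp [SimpleGraph.neighborSet, Set.mem_toFinset]
  rw [← h1]; exact hH v

section Hcounts
variable {n d : ℕ} {H : SimpleGraph (Fin n)} (hH : ∀ v : Fin n, (H.neighborSet v).ncard ≤ d)
include hH

lemma cardJH1 :
    (Finset.univ.filter fun p : Fin n × Fin n × Fin n =>
      H.Adj p.1 p.2.1 ∧ H.Adj p.1 p.2.2).card ≤ n * (d * d) := by
  classical
  refine le_trans (Finset.card_le_card_of_injOn
    (t := Finset.univ.sigma fun y =>
      (Finset.univ.filter (H.Adj y)) ×ˢ (Finset.univ.filter (H.Adj y)))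
    (fun p => (⟨p.1, (p.2.1, p.2.2)⟩ : Σ _ : Fin n, Fin n × Fin n))
    ?_ ?_) ?_
  case refine_3 =>
    exact sig_le Finset.univ _ n (d*d) (by simp)
      (fun a _ => prod_le _ _ d d (degle hH a) (degle hH a))
  · rintro ⟨y, x, w⟩ hp
    simp only [Finset.mem_coe, Finset.mem_filter] at hp
    simp only [Finset.mem_coe, Finset.mem_sigma, Finset.mem_product, Finset.mem_filter, Finset.mem_univ,
      true_and]
    exact hp.2
  · rintro ⟨y, x, w⟩ - ⟨y', x', w'⟩ - h
    simp only [Sigma.ext_iff, heq_eq_eq, Prod.ext_iff] at h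
    obtain ⟨h1, h2⟩ := h
    simp_all

lemma cardJH2 :
    (Finset.univ.filter fun p : Fin n × Fin n × Fin n × Fin n =>
      H.Adj p.1 p.2.1 ∧ H.Adj p.2.2.1 p.2.2.2).card ≤ (n * d) * (n * d) := by
  classical
  refine le_trans (Finset.card_le_card_of_injOn
    (t := (Finset.univ.sigma fun x => Finset.univ.filter (H.Adj x)) ×ˢ
          (Finset.univ.sigma fun z => Finset.univ.filter (H.Adj z)))
    (fun p => ((⟨p.1, p.2.1⟩ : Σ _ : Fin n, Fin n), (⟨p.2.2.1, p.2.2.2⟩ : Σ _ : Fin n, Fin n)))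
    ?_ ?_) ?_
  case refine_3 =>
    refine prod_le _ _ (n*d) (n*d) ?_ ?_ <;>
      exact sig_le Finset.univ _ n d (by simp) (fun a _ => degle hH a)
  · rintro ⟨x, y, z, w⟩ hp
    simp only [Finset.mem_coe, Finset.mem_filter] at hp
    simp only [Finset.mem_coe, Finset.mem_product, Finset.mem_sigma, Finset.mem_filter, Finset.mem_univ,
      true_and]
    exact hp.2
  · rintro ⟨x, y, z, w⟩ - ⟨x', y', z', w'⟩ - h
    simp only [Sigma.ext_iff, heq_eq_eq, Prod.ext_iff] at h
    simp_all

lemma cardJH3s :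
    (Finset.univ.filter fun p : Fin n × Fin n × Fin n × Fin n =>
      H.Adj p.1 p.2.1 ∧ H.Adj p.1 p.2.2.1 ∧ H.Adj p.1 p.2.2.2).card ≤ n * (d * (d * d)) := by
  classical
  refine le_trans (Finset.card_le_card_of_injOn
    (t := Finset.univ.sigma fun c =>
      (Finset.univ.filter (H.Adj c)) ×ˢ (Finset.univ.filter (H.Adj c)) ×ˢ
        (Finset.univ.filter (H.Adj c)))
    (fun p => (⟨p.1, (p.2.1, p.2.2.1, p.2.2.2)⟩ : Σ _ : Fin n, Fin n × Fin n × Fin n))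
    ?_ ?_) ?_
  case refine_3 =>
    refine sig_le Finset.univ _ n (d*(d*d)) (by simp) (fun a _ => ?_)
    exact prod_le _ _ d (d*d) (degle hH a) (prod_le _ _ d d (degle hH a) (degle hH a))
  · rintro ⟨c, a, b, e⟩ hp
    simp only [Finset.mem_coe, Finset.mem_filter] at hp
    simp only [Finset.mem_coe, Finset.mem_sigma, Finset.mem_product, Finset.mem_filter, Finset.mem_univ,
      true_and]
    exact ⟨hp.2.1, hp.2.2.1, hp.2.2.2⟩
  · rintro ⟨c, a, b, e⟩ - ⟨c', a', b', e'⟩ - h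
    simp only [Sigma.ext_iff, heq_eq_eq, Prod.ext_iff] at h
    simp_all

lemma cardJH4p :
    (Finset.univ.filter fun p : Fin n × Fin n × Fin n × Fin n =>
      H.Adj p.1 p.2.1 ∧ H.Adj p.2.1 p.2.2.1 ∧ H.Adj p.2.2.1 p.2.2.2).card
      ≤ n * (d * (d * d)) := by
  classical
  refine le_trans (Finset.card_le_card_of_injOn
    (t := Finset.univ.sigma fun a => (Finset.univ.filter (H.Adj a)).sigma fun b =>
      (Finset.univ.filter (H.Adj b)).sigma fun c => Finset.univ.filter (H.Adj c))
    (fun p => (⟨p.1, p.2.1, p.2.2.1, p.2.2.2⟩ :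
      Σ _ : Fin n, Σ _ : Fin n, Σ _ : Fin n, Fin n))
    ?_ ?_) ?_
  case refine_3 =>
    refine sig_le Finset.univ _ n (d*(d*d)) (by simp) (fun a _ => ?_)
    refine sig_le _ _ d (d*d) (degle hH a) (fun b _ => ?_)
    exact sig_le _ _ d d (degle hH b) (fun c _ => degle hH c)
  · rintro ⟨a, b, c, e⟩ hp
    simp only [Finset.mem_coe, Finset.mem_filter] at hp
    simp only [Finset.mem_coe, Finset.mem_sigma, Finset.mem_filter, Finset.mem_univ, true_and]
    exact ⟨hp.2.1, hp.2.2.1, hp.2.2.2⟩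
  · rintro ⟨a, b, c, e⟩ - ⟨a', b', c', e'⟩ - h
    simp only [Sigma.ext_iff, heq_eq_eq] at h
    simp_all

lemma cardJH5 :
    (Finset.univ.filter fun p : Fin n × Fin n × Fin n × Fin n × Fin n =>
      H.Adj p.1 p.2.1 ∧ H.Adj p.2.1 p.2.2.1 ∧ H.Adj p.2.2.2.1 p.2.2.2.2).card
      ≤ (n * (d * d)) * (n * d) := by
  classical
  refine le_trans (Finset.card_le_card_of_injOn
    (t := (Finset.univ.sigma fun b =>
      (Finset.univ.filter (H.Adj b)) ×ˢ (Finset.univ.filter (H.Adj b))) ×ˢ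
      (Finset.univ.sigma fun z => Finset.univ.filter (H.Adj z)))
    (fun p => ((⟨p.2.1, (p.1, p.2.2.1)⟩ : Σ _ : Fin n, Fin n × Fin n),
               (⟨p.2.2.2.1, p.2.2.2.2⟩ : Σ _ : Fin n, Fin n)))
    ?_ ?_) ?_
  case refine_3 =>
    refine prod_le _ _ (n*(d*d)) (n*d) ?_ ?_
    · exact sig_le Finset.univ _ n (d*d) (by simp)
        (fun b _ => prod_le _ _ d d (degle hH b) (degle hH b))
    · exact sig_le Finset.univ _ n d (by simp) (fun z _ => degle hH z)
  · rintro ⟨a, b, c, z, w⟩ hp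
    simp only [Finset.mem_coe, Finset.mem_filter] at hp
    simp only [Finset.mem_coe, Finset.mem_product, Finset.mem_sigma, Finset.mem_filter, Finset.mem_univ,
      true_and]
    exact ⟨⟨hp.2.1.symm, hp.2.2.1⟩, hp.2.2.2⟩
  · rintro ⟨a, b, c, z, w⟩ - ⟨a', b', c', z', w'⟩ - h
    simp only [Sigma.ext_iff, heq_eq_eq, Prod.ext_iff] at h
    simp_all

lemma cardJH6 :
    (Finset.univ.filter fun p : Fin n × Fin n × Fin n × Fin n × Fin n × Fin n =>
      H.Adj p.1 p.2.1 ∧ H.Adj p.2.2.1 p.2.2.2.1 ∧ H.Adj p.2.2.2.2.1 p.2.2.2.2.2).card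
      ≤ (n * d) * ((n * d) * (n * d)) := by
  classical
  refine le_trans (Finset.card_le_card_of_injOn
    (t := (Finset.univ.sigma fun v => Finset.univ.filter (H.Adj v)) ×ˢ
      ((Finset.univ.sigma fun v => Finset.univ.filter (H.Adj v)) ×ˢ
       (Finset.univ.sigma fun v => Finset.univ.filter (H.Adj v))))
    (fun p => ((⟨p.1, p.2.1⟩ : Σ _ : Fin n, Fin n),
               ((⟨p.2.2.1, p.2.2.2.1⟩ : Σ _ : Fin n, Fin n),
                (⟨p.2.2.2.2.1, p.2.2.2.2.2⟩ : Σ _ : Fin n, Fin n))))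
    ?_ ?_) ?_
  case refine_3 =>
    have hs : ((Finset.univ : Finset (Fin n)).sigma
        (fun v => Finset.univ.filter (H.Adj v))).card ≤ n * d :=
      sig_le Finset.univ _ n d (by simp) (fun a _ => degle hH a)
    exact prod_le _ _ (n*d) ((n*d)*(n*d)) hs (prod_le _ _ (n*d) (n*d) hs hs)
  · rintro ⟨a, b, c, e, f, g⟩ hp
    simp only [Finset.mem_coe, Finset.mem_filter] at hp
    simp only [Finset.mem_coe, Finset.mem_product, Finset.mem_sigma, Finset.mem_filter, Finset.mem_univ,
      true_and]
    exact ⟨hp.2.1, hp.2.2.1, hp.2.2.2⟩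
  · rintro ⟨a, b, c, e, f, g⟩ - ⟨a', b', c', e', f', g'⟩ - h
    simp only [Sigma.ext_iff, heq_eq_eq, Prod.ext_iff] at h
    simp_all

end Hcounts

section Bcounts
variable {n t : ℕ} {D : Finset (Finset (Sym2 (Fin n)))}

open Finset

lemma cardNB {m : ℕ} (B' : Finset (Sym2 (Fin n))) (hnd : ∀ e ∈ B', ¬ e.IsDiag)
    (u : Fin n) (hdeg : (B'.filter fun e => u ∈ e).card ≤ m) :
    (Finset.univ.filter fun a => s(u, a) ∈ B').card ≤ m := by
  classical
  refine le_trans (Finset.card_le_card_of_injOn (fun a => s(u, a)) ?_ ?_) hdeg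
  · intro a ha
    simp only [Finset.mem_coe, Finset.mem_filter, Finset.mem_univ, true_and] at ha ⊢
    exact ⟨ha, Sym2.mem_mk_left u a⟩
  · intro a ha b hb hab
    simp only [Finset.coe_filter, Set.mem_setOf_eq] at ha hb
    rcases Sym2.eq_iff.mp hab with ⟨-, h⟩ | ⟨h1, h2⟩
    · exact h
    · exfalso
      apply hnd _ ha.2
      rw [← h2]
      exact Sym2.mk_isDiag_iff.mpr rfl

lemma cardJB1 {m : ℕ} (B' : Finset (Sym2 (Fin n))) (hnd : ∀ e ∈ B', ¬ e.IsDiag)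
    (hdeg : ∀ u : Fin n, (B'.filter fun e => u ∈ e).card ≤ m) :
    (Finset.univ.filter fun q : Fin n × Fin n × Fin n =>
      s(q.1, q.2.1) ∈ B' ∧ s(q.1, q.2.2) ∈ B').card ≤ n * (m * m) := by
  classical
  refine le_trans (Finset.card_le_card_of_injOn
    (t := Finset.univ.sigma fun u =>
      (Finset.univ.filter fun a => s(u, a) ∈ B') ×ˢ (Finset.univ.filter fun a => s(u, a) ∈ B'))
    (fun q => (⟨q.1, (q.2.1, q.2.2)⟩ : Σ _ : Fin n, Fin n × Fin n)) ?_ ?_) ?_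
  · rintro ⟨u, a, b⟩ hq
    simp only [Finset.mem_coe, Finset.mem_filter] at hq
    simp only [Finset.mem_coe, Finset.mem_sigma, Finset.mem_product, Finset.mem_filter, Finset.mem_univ,
      true_and]
    exact hq.2
  · rintro ⟨u, a, b⟩ - ⟨u', a', b'⟩ - h
    simp only [Sigma.ext_iff, heq_eq_eq, Prod.ext_iff] at h
    simp_all
  · exact sig_le Finset.univ _ n (m*m) (by simp)
      (fun u _ => prod_le _ _ m m (cardNB B' hnd u (hdeg u)) (cardNB B' hnd u (hdeg u)))

/-- ordered pairs realizing an edge of `P` -/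
lemma OP_le_two (P : Finset (Sym2 (Fin n))) (hnd : ∀ e ∈ P, ¬ e.IsDiag) :
    (Finset.univ.filter fun p : Fin n × Fin n => s(p.1, p.2) ∈ P).card ≤ 2 * P.card := by
  classical
  refine le_trans (Finset.card_le_card_of_injOn
    (t := P ×ˢ (Finset.univ : Finset Bool))
    (fun p => (s(p.1, p.2), decide (p.1 < p.2))) ?_ ?_) ?_
  · rintro ⟨a, b⟩ hp
    simp only [Finset.mem_coe, Finset.mem_filter, Finset.mem_univ, true_and] at hp
    simp only [Finset.mem_coe, Finset.mem_product, Finset.mem_univ, and_true]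
    exact hp
  · rintro ⟨a, b⟩ ha ⟨a', b'⟩ hb h
    simp only [Finset.coe_filter, Set.mem_setOf_eq] at ha hb
    simp only [Prod.mk.injEq] at h
    obtain ⟨h1, h2⟩ := h
    rcases Sym2.eq_iff.mp h1 with ⟨e1, e2⟩ | ⟨e1, e2⟩
    · simp [e1, e2]
    · subst e1 e2
      have hd : ¬ (a < b ↔ b < a) := by
        intro hiff
        have hne : a ≠ b := fun hab => hnd _ ha.2 (by rw [hab]; exact Sym2.mk_isDiag_iff.mpr rfl)
        rcases lt_or_gt_of_ne hne with h | h
        · exact absurd (hiff.mp h) (lt_asymm h)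
        · exact absurd (hiff.mpr h) (lt_asymm h)
      exfalso
      apply hd
      constructor
      · intro h; exact of_decide_eq_true (by rw [← h2]; exact decide_eq_true h)
      · intro h; exact of_decide_eq_true (by rw [h2]; exact decide_eq_true h)
  · rw [Finset.card_product]
    simp [mul_comm]

lemma OP_clique (s : Finset (Fin n)) :
    (Finset.univ.filter fun p : Fin n × Fin n => s(p.1, p.2) ∈ cliqueEdges s)
      ⊆ s.offDiag := by
  classical
  rintro ⟨a, b⟩ hp
  simp only [Finset.mem_filter, Finset.mem_univ, true_and, cliqueEdges] at hp
  obtain ⟨hnd, hmem⟩ := hp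
  refine Finset.mem_offDiag.mpr ⟨hmem _ (Sym2.mem_mk_left a b), hmem _ (Sym2.mem_mk_right a b), ?_⟩
  intro hab
  exact hnd (Sym2.mk_isDiag_iff.mpr hab)

lemma OP_clique_card (s : Finset (Fin n)) :
    (Finset.univ.filter fun p : Fin n × Fin n => s(p.1, p.2) ∈ cliqueEdges s).card
      ≤ s.card * s.card := by
  refine le_trans (Finset.card_le_card (OP_clique s)) ?_
  rw [Finset.offDiag_card]
  omega

end Bcounts

section SVsec
variable {n t : ℕ}

open Finset

noncomputable def SV (t : ℕ) (D : Finset (Finset (Sym2 (Fin n)))) (p q : Fin n) :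
    Finset (Fin n) :=
  if h : ∃ s : Finset (Fin n), s.card = t ∧ cliqueEdges s ∈ D ∧ s(p, q) ∈ cliqueEdges s
  then h.choose else ∅

lemma SV_card (D : Finset (Finset (Sym2 (Fin n)))) (p q : Fin n) :
    (SV t D p q).card ≤ t := by
  rw [SV]
  split
  · next h => exact le_of_eq h.choose_spec.1
  · simp

lemma SV_mem {D : Finset (Finset (Sym2 (Fin n)))} (hdec : IsDecompKn n D)
    {P : Finset (Sym2 (Fin n))} {p q : Fin n} (hP : P ∈ D) (hKt : IsKClique t P)
    (hpq : s(p, q) ∈ P) {e : Sym2 (Fin n)} (he : e ∈ P) {x : Fin n} (hx : x ∈ e) :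
    x ∈ SV t D p q := by
  classical
  obtain ⟨s0, hcard0, hP0⟩ := hKt
  have hcond : ∃ s : Finset (Fin n), s.card = t ∧ cliqueEdges s ∈ D ∧ s(p, q) ∈ cliqueEdges s :=
    ⟨s0, hcard0, hP0 ▸ hP, hP0 ▸ hpq⟩
  have hSV : SV t D p q = hcond.choose := by rw [SV, dif_pos hcond]
  rw [hSV]
  obtain ⟨hc1, hc2, hc3⟩ := hcond.choose_spec
  have hnd : ¬ (s(p, q)).IsDiag := (hdec.1 P hP).2 _ hpq
  obtain ⟨Q, hQ, hQuniq⟩ := hdec.2 _ hnd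
  have e1 : cliqueEdges hcond.choose = P := by
    have h1 := hQuniq _ ⟨hc2, hc3⟩
    have h2 := hQuniq P ⟨hP, hpq⟩
    rw [h1, h2]
  rw [← e1] at he
  have hme : ∀ (s' : Finset (Fin n)) (e' : Sym2 (Fin n)), e' ∈ cliqueEdges s' →
      ∀ y ∈ e', y ∈ s' := by
    intro s' e' he' y hy
    have := (Finset.mem_filter.mp he').2
    exact this.2 y hy
  exact hme _ _ he x hx

variable {D : Finset (Finset (Sym2 (Fin n)))} (hdec : IsDecompKn n D)
include hdec

lemma cardJB3s :
    (Finset.univ.filter fun q : Fin n × Fin n × Fin n × Fin n =>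
      ∃ P ∈ D, IsKClique t P ∧ s(q.1, q.2.1) ∈ P ∧ s(q.1, q.2.2.1) ∈ P ∧
        s(q.1, q.2.2.2) ∈ P).card ≤ (n * n) * (t * t) := by
  classical
  refine le_trans (Finset.card_le_card_of_injOn
    (t := (Finset.univ ×ˢ Finset.univ).sigma fun pq : Fin n × Fin n =>
      SV t D pq.1 pq.2 ×ˢ SV t D pq.1 pq.2)
    (fun q => (⟨(q.1, q.2.1), (q.2.2.1, q.2.2.2)⟩ :
      Σ _ : Fin n × Fin n, Fin n × Fin n)) ?_ ?_) ?_
  · rintro ⟨v, a, b, c⟩ hq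
    simp only [Finset.mem_coe, Finset.mem_filter, Finset.mem_univ, true_and] at hq
    obtain ⟨P, hP, hKt, h1, h2, h3⟩ := hq
    refine Finset.mem_sigma.mpr ⟨Finset.mem_product.mpr ⟨Finset.mem_univ _, Finset.mem_univ _⟩, ?_⟩
    exact Finset.mem_product.mpr ⟨SV_mem hdec hP hKt h1 h2 (Sym2.mem_mk_right v b),
      SV_mem hdec hP hKt h1 h3 (Sym2.mem_mk_right v c)⟩
  · rintro ⟨v, a, b, c⟩ - ⟨v', a', b', c'⟩ - h
    simp only [Sigma.ext_iff, heq_eq_eq, Prod.ext_iff] at h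
    simp_all
  · refine sig_le _ _ (n * n) (t * t) (by simp [Finset.card_univ]) (fun pq _ => ?_)
    exact prod_le _ _ t t (SV_card D pq.1 pq.2) (SV_card D pq.1 pq.2)

lemma cardJB4p :
    (Finset.univ.filter fun q : Fin n × Fin n × Fin n × Fin n =>
      ∃ P ∈ D, IsKClique t P ∧ s(q.1, q.2.1) ∈ P ∧ s(q.2.1, q.2.2.1) ∈ P ∧
        s(q.2.2.1, q.2.2.2) ∈ P).card ≤ (n * n) * (t * t) := by
  classical
  refine le_trans (Finset.card_le_card_of_injOn
    (t := (Finset.univ ×ˢ Finset.univ).sigma fun pq : Fin n × Fin n =>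
      SV t D pq.1 pq.2 ×ˢ SV t D pq.1 pq.2)
    (fun q => (⟨(q.1, q.2.1), (q.2.2.1, q.2.2.2)⟩ :
      Σ _ : Fin n × Fin n, Fin n × Fin n)) ?_ ?_) ?_
  · rintro ⟨a, b, c, e⟩ hq
    simp only [Finset.mem_coe, Finset.mem_filter, Finset.mem_univ, true_and] at hq
    obtain ⟨P, hP, hKt, h1, h2, h3⟩ := hq
    refine Finset.mem_sigma.mpr ⟨Finset.mem_product.mpr ⟨Finset.mem_univ _, Finset.mem_univ _⟩, ?_⟩
    exact Finset.mem_product.mpr ⟨SV_mem hdec hP hKt h1 h2 (Sym2.mem_mk_right b c),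
      SV_mem hdec hP hKt h1 h3 (Sym2.mem_mk_right c e)⟩
  · rintro ⟨a, b, c, e⟩ - ⟨a', b', c', e'⟩ - h
    simp only [Sigma.ext_iff, heq_eq_eq, Prod.ext_iff] at h
    simp_all
  · refine sig_le _ _ (n * n) (t * t) (by simp [Finset.card_univ]) (fun pq _ => ?_)
    exact prod_le _ _ t t (SV_card D pq.1 pq.2) (SV_card D pq.1 pq.2)

lemma cardJB5 :
    (Finset.univ.filter fun q : Fin n × Fin n × Fin n × Fin n × Fin n =>
      ∃ P ∈ D, IsKClique t P ∧ s(q.1, q.2.1) ∈ P ∧ s(q.2.1, q.2.2.1) ∈ P ∧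
        s(q.2.2.2.1, q.2.2.2.2) ∈ P).card ≤ (n * n) * (t * (t * t)) := by
  classical
  refine le_trans (Finset.card_le_card_of_injOn
    (t := (Finset.univ ×ˢ Finset.univ).sigma fun pq : Fin n × Fin n =>
      SV t D pq.1 pq.2 ×ˢ SV t D pq.1 pq.2 ×ˢ SV t D pq.1 pq.2)
    (fun q => (⟨(q.1, q.2.1), (q.2.2.1, q.2.2.2.1, q.2.2.2.2)⟩ :
      Σ _ : Fin n × Fin n, Fin n × Fin n × Fin n)) ?_ ?_) ?_
  · rintro ⟨a, b, c, z, w⟩ hq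
    simp only [Finset.mem_coe, Finset.mem_filter, Finset.mem_univ, true_and] at hq
    obtain ⟨P, hP, hKt, h1, h2, h3⟩ := hq
    refine Finset.mem_sigma.mpr ⟨Finset.mem_product.mpr ⟨Finset.mem_univ _, Finset.mem_univ _⟩, ?_⟩
    refine Finset.mem_product.mpr ⟨SV_mem hdec hP hKt h1 h2 (Sym2.mem_mk_right b c), ?_⟩
    exact Finset.mem_product.mpr ⟨SV_mem hdec hP hKt h1 h3 (Sym2.mem_mk_left z w),
      SV_mem hdec hP hKt h1 h3 (Sym2.mem_mk_right z w)⟩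
  · rintro ⟨a, b, c, z, w⟩ - ⟨a', b', c', z', w'⟩ - h
    simp only [Sigma.ext_iff, heq_eq_eq, Prod.ext_iff] at h
    simp_all
  · refine sig_le _ _ (n * n) (t * (t * t)) (by simp [Finset.card_univ]) (fun pq _ => ?_)
    exact prod_le _ _ t (t * t) (SV_card D pq.1 pq.2)
      (prod_le _ _ t t (SV_card D pq.1 pq.2) (SV_card D pq.1 pq.2))

lemma cardJB6 :
    (Finset.univ.filter fun q : Fin n × Fin n × Fin n × Fin n × Fin n × Fin n =>
      ∃ P ∈ D, IsKClique t P ∧ s(q.1, q.2.1) ∈ P ∧ s(q.2.2.1, q.2.2.2.1) ∈ P ∧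
        s(q.2.2.2.2.1, q.2.2.2.2.2) ∈ P).card ≤ (n * n) * (t * (t * (t * t))) := by
  classical
  refine le_trans (Finset.card_le_card_of_injOn
    (t := (Finset.univ ×ˢ Finset.univ).sigma fun pq : Fin n × Fin n =>
      SV t D pq.1 pq.2 ×ˢ SV t D pq.1 pq.2 ×ˢ SV t D pq.1 pq.2 ×ˢ SV t D pq.1 pq.2)
    (fun q => (⟨(q.1, q.2.1), (q.2.2.1, q.2.2.2.1, q.2.2.2.2.1, q.2.2.2.2.2)⟩ :
      Σ _ : Fin n × Fin n, Fin n × Fin n × Fin n × Fin n)) ?_ ?_) ?_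
  · rintro ⟨a, b, c, e, f, g⟩ hq
    simp only [Finset.mem_coe, Finset.mem_filter, Finset.mem_univ, true_and] at hq
    obtain ⟨P, hP, hKt, h1, h2, h3⟩ := hq
    refine Finset.mem_sigma.mpr ⟨Finset.mem_product.mpr ⟨Finset.mem_univ _, Finset.mem_univ _⟩, ?_⟩
    refine Finset.mem_product.mpr ⟨SV_mem hdec hP hKt h1 h2 (Sym2.mem_mk_left c e), ?_⟩
    refine Finset.mem_product.mpr ⟨SV_mem hdec hP hKt h1 h2 (Sym2.mem_mk_right c e), ?_⟩
    exact Finset.mem_product.mpr ⟨SV_mem hdec hP hKt h1 h3 (Sym2.mem_mk_left f g),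
      SV_mem hdec hP hKt h1 h3 (Sym2.mem_mk_right f g)⟩
  · rintro ⟨a, b, c, e, f, g⟩ - ⟨a', b', c', e', f', g'⟩ - h
    simp only [Sigma.ext_iff, heq_eq_eq, Prod.ext_iff] at h
    simp_all
  · refine sig_le _ _ (n * n) (t * (t * (t * t))) (by simp [Finset.card_univ]) (fun pq _ => ?_)
    exact prod_le _ _ t (t * (t * t)) (SV_card D pq.1 pq.2)
      (prod_le _ _ t (t * t) (SV_card D pq.1 pq.2)
        (prod_le _ _ t t (SV_card D pq.1 pq.2) (SV_card D pq.1 pq.2)))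

end SVsec

open Finset in
lemma cardJB2 {n t : ℕ} {D : Finset (Finset (Sym2 (Fin n)))}
    (hdec : IsDecompKn n D)
    (hstruct : ∀ P ∈ D, IsKClique t P ∨ IsKClique 3 P ∨ IsC4 P ∨ IsKClique (2 * t - 1) P)
    (h3 : (D.filter fun P => ¬ IsKClique t P ∧ IsKClique 3 P).card * 6 ≤ n * (t - 3))
    (h4 : (D.filter fun P => ¬ IsKClique t P ∧ IsC4 P).card ≤ t - 3)
    (h5 : (D.filter fun P => ¬ IsKClique t P ∧ IsKClique (2 * t - 1) P).card ≤ t - 1) :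
    (Finset.univ.filter fun q : Fin n × Fin n × Fin n × Fin n =>
      ∃ P ∈ D, ¬ IsKClique t P ∧ s(q.1, q.2.1) ∈ P ∧ s(q.2.2.1, q.2.2.2) ∈ P).card
    ≤ 6 * (n * (t - 3)) + 64 * (t - 3) + 16 * t ^ 4 * (t - 1) := by
  classical
  set Dnon := D.filter (fun P => ¬ IsKClique t P) with hDnon
  set OP : Finset (Sym2 (Fin n)) → Finset (Fin n × Fin n) :=
    fun P => Finset.univ.filter fun p : Fin n × Fin n => s(p.1, p.2) ∈ P with hOP
  have step1 : (Finset.univ.filter fun q : Fin n × Fin n × Fin n × Fin n =>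
      ∃ P ∈ D, ¬ IsKClique t P ∧ s(q.1, q.2.1) ∈ P ∧ s(q.2.2.1, q.2.2.2) ∈ P).card
      ≤ ∑ P ∈ Dnon, (OP P ×ˢ OP P).card := by
    rw [← Finset.card_sigma]
    refine Finset.card_le_card_of_injOn
      (fun q => if h : ∃ P ∈ Dnon, s(q.1, q.2.1) ∈ P ∧ s(q.2.2.1, q.2.2.2) ∈ P
        then (⟨h.choose, ((q.1, q.2.1), (q.2.2.1, q.2.2.2))⟩ :
          Σ _ : Finset (Sym2 (Fin n)), (Fin n × Fin n) × (Fin n × Fin n))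
        else ⟨∅, ((q.1, q.2.1), (q.2.2.1, q.2.2.2))⟩) ?_ ?_
    · intro q hq
      simp only [Finset.mem_coe, Finset.mem_filter, Finset.mem_univ, true_and] at hq
      obtain ⟨P, hPD, hnKt, hA, hB⟩ := hq
      have hex : ∃ P ∈ Dnon, s(q.1, q.2.1) ∈ P ∧ s(q.2.2.1, q.2.2.2) ∈ P :=
        ⟨P, Finset.mem_filter.mpr ⟨hPD, hnKt⟩, hA, hB⟩
      beta_reduce
      rw [dif_pos hex]
      obtain ⟨hc1, hc2, hc3⟩ := hex.choose_spec
      refine Finset.mem_sigma.mpr ⟨hc1, ?_⟩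
      refine Finset.mem_product.mpr ⟨?_, ?_⟩ <;>
        simp only [hOP, Finset.mem_filter, Finset.mem_univ, true_and]
      · exact hc2
      · exact hc3
    · intro q hq q' hq' h
      simp only [Finset.coe_filter, Set.mem_setOf_eq] at hq hq'
      obtain ⟨P, hPD, hnKt, hA, hB⟩ := hq.2
      obtain ⟨P', hPD', hnKt', hA', hB'⟩ := hq'.2
      have hex : ∃ P ∈ Dnon, s(q.1, q.2.1) ∈ P ∧ s(q.2.2.1, q.2.2.2) ∈ P :=
        ⟨P, Finset.mem_filter.mpr ⟨hPD, hnKt⟩, hA, hB⟩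
      have hex' : ∃ P ∈ Dnon, s(q'.1, q'.2.1) ∈ P ∧ s(q'.2.2.1, q'.2.2.2) ∈ P :=
        ⟨P', Finset.mem_filter.mpr ⟨hPD', hnKt'⟩, hA', hB'⟩
      beta_reduce at h
      rw [dif_pos hex, dif_pos hex'] at h
      simp only [Sigma.ext_iff, heq_eq_eq, Prod.ext_iff] at h
      obtain ⟨-, ⟨e1, e2⟩, e3, e4⟩ := h
      exact Prod.ext e1 (Prod.ext e2 (Prod.ext e3 e4))
  refine step1.trans ?_
  -- split the sum by member type
  have hsplit1 := Finset.sum_filter_add_sum_filter_not Dnon (fun P => IsKClique 3 P)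
    (fun P => (OP P ×ˢ OP P).card)
  have hsplit2 := Finset.sum_filter_add_sum_filter_not (Dnon.filter fun P => ¬ IsKClique 3 P)
    (fun P => IsC4 P) (fun P => (OP P ×ˢ OP P).card)
  rw [← hsplit1, ← hsplit2]
  have piece1 : ∑ P ∈ Dnon.filter (fun P => IsKClique 3 P), (OP P ×ˢ OP P).card
      ≤ 6 * (n * (t - 3)) := by
    have hb : ∀ P ∈ Dnon.filter (fun P => IsKClique 3 P), (OP P ×ˢ OP P).card ≤ 36 := by
      intro P hP
      obtain ⟨s0, hs0, rfl⟩ := (Finset.mem_filter.mp hP).2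
      have h6 : (OP (cliqueEdges s0)).card ≤ 6 := by
        refine le_trans (Finset.card_le_card (OP_clique s0)) ?_
        rw [Finset.offDiag_card, hs0]
      rw [Finset.card_product]
      calc (OP (cliqueEdges s0)).card * (OP (cliqueEdges s0)).card ≤ 6 * 6 :=
        Nat.mul_le_mul h6 h6
        _ = 36 := rfl
    calc ∑ P ∈ Dnon.filter (fun P => IsKClique 3 P), (OP P ×ˢ OP P).card
        ≤ (Dnon.filter (fun P => IsKClique 3 P)).card • 36 :=
          Finset.sum_le_card_nsmul _ _ 36 hb
      _ = (D.filter fun P => ¬ IsKClique t P ∧ IsKClique 3 P).card * 36 := by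
          rw [smul_eq_mul, hDnon, Finset.filter_filter]
      _ ≤ 6 * (n * (t - 3)) := by
          have := Nat.mul_le_mul_right 6 h3
          omega
  have piece2 : ∑ P ∈ (Dnon.filter fun P => ¬ IsKClique 3 P).filter (fun P => IsC4 P),
      (OP P ×ˢ OP P).card ≤ 64 * (t - 3) := by
    have hb : ∀ P ∈ (Dnon.filter fun P => ¬ IsKClique 3 P).filter (fun P => IsC4 P),
        (OP P ×ˢ OP P).card ≤ 64 := by
      intro P hP
      have hPD : P ∈ D := by
        have h1 := Finset.mem_filter.mp hP
        have h2 := Finset.mem_filter.mp h1.1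
        exact (Finset.mem_filter.mp h2.1).1
      obtain ⟨a, b, c, e, -, hPe⟩ := (Finset.mem_filter.mp hP).2
      have hcard : P.card ≤ 4 := by
        rw [hPe]
        refine le_trans (Finset.card_insert_le _ _) (Nat.succ_le_succ ?_)
        refine le_trans (Finset.card_insert_le _ _) (Nat.succ_le_succ ?_)
        refine le_trans (Finset.card_insert_le _ _) (Nat.succ_le_succ ?_)
        exact le_of_eq (Finset.card_singleton _)
      have h8 : (OP P).card ≤ 8 := by
        refine le_trans (OP_le_two P (fun e' he' => (hdec.1 P hPD).2 e' he')) ?_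
        omega
      rw [Finset.card_product]
      calc (OP P).card * (OP P).card ≤ 8 * 8 := Nat.mul_le_mul h8 h8
        _ = 64 := rfl
    calc ∑ P ∈ (Dnon.filter fun P => ¬ IsKClique 3 P).filter (fun P => IsC4 P),
        (OP P ×ˢ OP P).card
        ≤ ((Dnon.filter fun P => ¬ IsKClique 3 P).filter (fun P => IsC4 P)).card • 64 :=
          Finset.sum_le_card_nsmul _ _ 64 hb
      _ ≤ (t - 3) * 64 := by
          rw [smul_eq_mul]
          refine Nat.mul_le_mul_right 64 (le_trans (Finset.card_le_card ?_) h4)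
          intro P hP
          have h1 := Finset.mem_filter.mp hP
          have h2 := Finset.mem_filter.mp h1.1
          have h3' := Finset.mem_filter.mp h2.1
          exact Finset.mem_filter.mpr ⟨h3'.1, h3'.2, h1.2⟩
      _ = 64 * (t - 3) := Nat.mul_comm _ _
  have piece3 : ∑ P ∈ (Dnon.filter fun P => ¬ IsKClique 3 P).filter (fun P => ¬ IsC4 P),
      (OP P ×ˢ OP P).card ≤ 16 * t ^ 4 * (t - 1) := by
    have hsub : (Dnon.filter fun P => ¬ IsKClique 3 P).filter (fun P => ¬ IsC4 P)
        ⊆ D.filter fun P => ¬ IsKClique t P ∧ IsKClique (2 * t - 1) P := by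
      intro P hP
      have h1 := Finset.mem_filter.mp hP
      have h2 := Finset.mem_filter.mp h1.1
      have h3' := Finset.mem_filter.mp h2.1
      rcases hstruct P h3'.1 with h | h | h | h
      · exact absurd h h3'.2
      · exact absurd h h2.2
      · exact absurd h h1.2
      · exact Finset.mem_filter.mpr ⟨h3'.1, h3'.2, h⟩
    have hb : ∀ P ∈ (Dnon.filter fun P => ¬ IsKClique 3 P).filter (fun P => ¬ IsC4 P),
        (OP P ×ˢ OP P).card ≤ 16 * t ^ 4 := by
      intro P hP
      obtain ⟨-, -, s0, hs0, rfl⟩ := Finset.mem_filter.mp (hsub hP)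
      have hOPle : (OP (cliqueEdges s0)).card ≤ 2 * t * (2 * t) := by
        refine le_trans (OP_clique_card s0) ?_
        rw [hs0]
        have : 2 * t - 1 ≤ 2 * t := by omega
        exact Nat.mul_le_mul this this
      rw [Finset.card_product]
      calc (OP (cliqueEdges s0)).card * (OP (cliqueEdges s0)).card
          ≤ (2 * t * (2 * t)) * (2 * t * (2 * t)) := Nat.mul_le_mul hOPle hOPle
        _ = 16 * t ^ 4 := by ring
    calc ∑ P ∈ (Dnon.filter fun P => ¬ IsKClique 3 P).filter (fun P => ¬ IsC4 P),
        (OP P ×ˢ OP P).card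
        ≤ ((Dnon.filter fun P => ¬ IsKClique 3 P).filter (fun P => ¬ IsC4 P)).card •
          (16 * t ^ 4) := Finset.sum_le_card_nsmul _ _ _ hb
      _ ≤ (t - 1) * (16 * t ^ 4) := by
          rw [smul_eq_mul]
          exact Nat.mul_le_mul_right _ (le_trans (Finset.card_le_card hsub) h5)
      _ = 16 * t ^ 4 * (t - 1) := Nat.mul_comm _ _
  omega

lemma pow_le_two_mul_pow {a b n m k : ℕ} (hb : 0 < b)
    (h1 : b * n ≤ a * (n - k)) (h2 : a ^ m ≤ 2 * b ^ m) :
    n ^ m ≤ 2 * (n - k) ^ m := by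
  have h3 : (b * n) ^ m ≤ (a * (n - k)) ^ m := Nat.pow_le_pow_left h1 m
  rw [mul_pow, mul_pow] at h3
  have h4 : a ^ m * (n - k) ^ m ≤ 2 * b ^ m * (n - k) ^ m :=
    Nat.mul_le_mul_right _ h2
  have h5 : b ^ m * n ^ m ≤ b ^ m * (2 * (n - k) ^ m) := by
    refine le_trans h3 (le_trans h4 (le_of_eq ?_))
    ring
  exact Nat.le_of_mul_le_mul_left h5 (Nat.pow_pos hb)

lemma fact3le (n : ℕ) (hn : 892 ≤ n) :
    n ^ 2 * (n - 3).factorial ≤ 2 * (n - 1).factorial := by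
  have hfac : (n - 1).factorial = (n - 1) * ((n - 2) * (n - 3).factorial) := by
    have e1 : n - 1 = (n - 2) + 1 := by omega
    have e2 : n - 2 = (n - 3) + 1 := by omega
    calc (n - 1).factorial = ((n - 2) + 1).factorial := by rw [← e1]
      _ = ((n - 2) + 1) * (n - 2).factorial := Nat.factorial_succ _
      _ = (n - 1) * (n - 2).factorial := by rw [← e1]
      _ = (n - 1) * (((n - 3) + 1).factorial) := by rw [← e2]
      _ = (n - 1) * (((n - 3) + 1) * (n - 3).factorial) := by rw [Nat.factorial_succ]
      _ = (n - 1) * ((n - 2) * (n - 3).factorial) := by rw [← e2]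
  have key : n ^ 2 ≤ 2 * ((n - 1) * (n - 2)) := by
    have k1 : n ^ 2 ≤ 2 * (n - 3) ^ 2 :=
      pow_le_two_mul_pow (a := 7) (b := 5) (by norm_num) (by omega) (by norm_num)
    refine le_trans k1 (Nat.mul_le_mul_left 2 ?_)
    rw [pow_two]
    exact Nat.mul_le_mul (by omega) (by omega)
  calc n ^ 2 * (n - 3).factorial ≤ (2 * ((n - 1) * (n - 2))) * (n - 3).factorial :=
      Nat.mul_le_mul_right _ key
    _ = 2 * (n - 1).factorial := by rw [hfac]; ring

lemma fact4le (n : ℕ) (hn : 892 ≤ n) :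
    n ^ 3 * (n - 4).factorial ≤ 2 * (n - 1).factorial := by
  have hfac : (n - 1).factorial = (n - 1) * ((n - 2) * ((n - 3) * (n - 4).factorial)) := by
    have e1 : n - 1 = (n - 2) + 1 := by omega
    have e2 : n - 2 = (n - 3) + 1 := by omega
    have e3 : n - 3 = (n - 4) + 1 := by omega
    calc (n - 1).factorial = ((n - 2) + 1).factorial := by rw [← e1]
      _ = ((n - 2) + 1) * (n - 2).factorial := Nat.factorial_succ _
      _ = (n - 1) * (n - 2).factorial := by rw [← e1]
      _ = (n - 1) * (((n - 3) + 1).factorial) := by rw [← e2]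
      _ = (n - 1) * (((n - 3) + 1) * (n - 3).factorial) := by rw [Nat.factorial_succ]
      _ = (n - 1) * ((n - 2) * (((n - 4) + 1).factorial)) := by rw [← e2, ← e3]
      _ = (n - 1) * ((n - 2) * (((n - 4) + 1) * (n - 4).factorial)) := by
          rw [Nat.factorial_succ]
      _ = (n - 1) * ((n - 2) * ((n - 3) * (n - 4).factorial)) := by rw [← e3]
  have key : n ^ 3 ≤ 2 * ((n - 1) * ((n - 2) * (n - 3))) := by
    have k1 : n ^ 3 ≤ 2 * (n - 4) ^ 3 :=
      pow_le_two_mul_pow (a := 5) (b := 4) (by norm_num) (by omega) (by norm_num)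
    refine le_trans k1 (Nat.mul_le_mul_left 2 ?_)
    have : (n - 4) ^ 3 = (n - 4) * ((n - 4) * (n - 4)) := by ring
    rw [this]
    exact Nat.mul_le_mul (by omega) (Nat.mul_le_mul (by omega) (by omega))
  calc n ^ 3 * (n - 4).factorial ≤ (2 * ((n - 1) * ((n - 2) * (n - 3)))) * (n - 4).factorial :=
      Nat.mul_le_mul_right _ key
    _ = 2 * (n - 1).factorial := by rw [hfac]; ring

lemma fact5le (n : ℕ) (hn : 892 ≤ n) :
    n ^ 4 * (n - 5).factorial ≤ 2 * (n - 1).factorial := by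
  have hfac : (n - 1).factorial
      = (n - 1) * ((n - 2) * ((n - 3) * ((n - 4) * (n - 5).factorial))) := by
    have e1 : n - 1 = (n - 2) + 1 := by omega
    have e2 : n - 2 = (n - 3) + 1 := by omega
    have e3 : n - 3 = (n - 4) + 1 := by omega
    have e4 : n - 4 = (n - 5) + 1 := by omega
    rw [e1, Nat.factorial_succ, ← e1, e2, Nat.factorial_succ, ← e2, e3,
      Nat.factorial_succ, ← e3, e4, Nat.factorial_succ, ← e4]
  have key : n ^ 4 ≤ 2 * ((n - 1) * ((n - 2) * ((n - 3) * (n - 4)))) := by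
    have k1 : n ^ 4 ≤ 2 * (n - 5) ^ 4 :=
      pow_le_two_mul_pow (a := 7) (b := 6) (by norm_num) (by omega) (by norm_num)
    refine le_trans k1 (Nat.mul_le_mul_left 2 ?_)
    have : (n - 5) ^ 4 = (n - 5) * ((n - 5) * ((n - 5) * (n - 5))) := by ring
    rw [this]
    exact Nat.mul_le_mul (by omega) (Nat.mul_le_mul (by omega)
      (Nat.mul_le_mul (by omega) (by omega)))
  calc n ^ 4 * (n - 5).factorial
      ≤ (2 * ((n - 1) * ((n - 2) * ((n - 3) * (n - 4))))) * (n - 5).factorial :=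
      Nat.mul_le_mul_right _ key
    _ = 2 * (n - 1).factorial := by rw [hfac]; ring

lemma fact6le (n : ℕ) (hn : 892 ≤ n) :
    n ^ 5 * (n - 6).factorial ≤ 2 * (n - 1).factorial := by
  have hfac : (n - 1).factorial
      = (n - 1) * ((n - 2) * ((n - 3) * ((n - 4) * ((n - 5) * (n - 6).factorial)))) := by
    have e1 : n - 1 = (n - 2) + 1 := by omega
    have e2 : n - 2 = (n - 3) + 1 := by omega
    have e3 : n - 3 = (n - 4) + 1 := by omega
    have e4 : n - 4 = (n - 5) + 1 := by omega
    have e5 : n - 5 = (n - 6) + 1 := by omega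
    rw [e1, Nat.factorial_succ, ← e1, e2, Nat.factorial_succ, ← e2, e3,
      Nat.factorial_succ, ← e3, e4, Nat.factorial_succ, ← e4, e5, Nat.factorial_succ, ← e5]
  have key : n ^ 5 ≤ 2 * ((n - 1) * ((n - 2) * ((n - 3) * ((n - 4) * (n - 5))))) := by
    have k1 : n ^ 5 ≤ 2 * (n - 6) ^ 5 :=
      pow_le_two_mul_pow (a := 8) (b := 7) (by norm_num) (by omega) (by norm_num)
    refine le_trans k1 (Nat.mul_le_mul_left 2 ?_)
    have : (n - 6) ^ 5 = (n - 6) * ((n - 6) * ((n - 6) * ((n - 6) * (n - 6)))) := by ring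
    rw [this]
    exact Nat.mul_le_mul (by omega) (Nat.mul_le_mul (by omega) (Nat.mul_le_mul (by omega)
      (Nat.mul_le_mul (by omega) (by omega))))
  calc n ^ 5 * (n - 6).factorial
      ≤ (2 * ((n - 1) * ((n - 2) * ((n - 3) * ((n - 4) * (n - 5)))))) * (n - 6).factorial :=
      Nat.mul_le_mul_right _ key
    _ = 2 * (n - 1).factorial := by rw [hfac]; ring

section Scen
variable {n : ℕ}

def tup3 (p : Fin n × Fin n × Fin n) : Fin 3 → Fin n := [p.1, p.2.1, p.2.2].get
def tup4 (p : Fin n × Fin n × Fin n × Fin n) : Fin 4 → Fin n :=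
  [p.1, p.2.1, p.2.2.1, p.2.2.2].get
def tup5 (p : Fin n × Fin n × Fin n × Fin n × Fin n) : Fin 5 → Fin n :=
  [p.1, p.2.1, p.2.2.1, p.2.2.2.1, p.2.2.2.2].get
def tup6 (p : Fin n × Fin n × Fin n × Fin n × Fin n × Fin n) : Fin 6 → Fin n :=
  [p.1, p.2.1, p.2.2.1, p.2.2.2.1, p.2.2.2.2.1, p.2.2.2.2.2].get

def Sc {k : ℕ} {α : Type} (I : Finset (α × α)) (tp : α → Fin k → Fin n)
    (π : Equiv.Perm (Fin n)) : Prop :=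
  ∃ p ∈ I, Function.Injective (tp p.1) ∧ ∀ j, π (tp p.1 j) = tp p.2 j

lemma inj_tup3 {a b c : Fin n} (h1 : a ≠ b) (h2 : a ≠ c) (h3 : b ≠ c) :
    Function.Injective (tup3 (a, b, c)) := by
  have h : tup3 (a, b, c) = [a, b, c].get := rfl
  rw [h, ← List.nodup_iff_injective_get]
  simp [h1, h2, h3]

lemma inj_tup4 {a b c d : Fin n} (h1 : a ≠ b) (h2 : a ≠ c) (h3 : a ≠ d)
    (h4 : b ≠ c) (h5 : b ≠ d) (h6 : c ≠ d) :
    Function.Injective (tup4 (a, b, c, d)) := by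
  have h : tup4 (a, b, c, d) = [a, b, c, d].get := rfl
  rw [h, ← List.nodup_iff_injective_get]
  simp [h1, h2, h3, h4, h5, h6]

lemma inj_tup5 {a b c d e : Fin n} (h1 : a ≠ b) (h2 : a ≠ c) (h3 : a ≠ d) (h4 : a ≠ e)
    (h5 : b ≠ c) (h6 : b ≠ d) (h7 : b ≠ e) (h8 : c ≠ d) (h9 : c ≠ e) (h10 : d ≠ e) :
    Function.Injective (tup5 (a, b, c, d, e)) := by
  have h : tup5 (a, b, c, d, e) = [a, b, c, d, e].get := rfl
  rw [h, ← List.nodup_iff_injective_get]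
  simp [h1, h2, h3, h4, h5, h6, h7, h8, h9, h10]

lemma inj_tup6 {a b c d e f : Fin n} (h1 : a ≠ b) (h2 : a ≠ c) (h3 : a ≠ d) (h4 : a ≠ e)
    (h5 : a ≠ f) (h6 : b ≠ c) (h7 : b ≠ d) (h8 : b ≠ e) (h9 : b ≠ f) (h10 : c ≠ d)
    (h11 : c ≠ e) (h12 : c ≠ f) (h13 : d ≠ e) (h14 : d ≠ f) (h15 : e ≠ f) :
    Function.Injective (tup6 (a, b, c, d, e, f)) := by
  have h : tup6 (a, b, c, d, e, f) = [a, b, c, d, e, f].get := rfl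
  rw [h, ← List.nodup_iff_injective_get]
  simp [h1, h2, h3, h4, h5, h6, h7, h8, h9, h10, h11, h12, h13, h14, h15]

lemma sym2_rep {α : Type*} (e : Sym2 α) : ∃ x y, e = s(x, y) := by
  induction e using Sym2.ind with
  | _ x y => exact ⟨x, y, rfl⟩

noncomputable def Bset (t : ℕ) (D : Finset (Finset (Sym2 (Fin n)))) : Finset (Sym2 (Fin n)) :=
  (D.filter fun P => ¬ IsKClique t P).biUnion id

noncomputable def I1 (t : ℕ) (D : Finset (Finset (Sym2 (Fin n)))) (H : SimpleGraph (Fin n)) :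
    Finset ((Fin n × Fin n × Fin n) × (Fin n × Fin n × Fin n)) :=
  (Finset.univ.filter fun p => H.Adj p.1 p.2.1 ∧ H.Adj p.1 p.2.2) ×ˢ
  (Finset.univ.filter fun q => s(q.1, q.2.1) ∈ Bset t D ∧ s(q.1, q.2.2) ∈ Bset t D)

noncomputable def I2 (t : ℕ) (D : Finset (Finset (Sym2 (Fin n)))) (H : SimpleGraph (Fin n)) :
    Finset ((Fin n × Fin n × Fin n × Fin n) × (Fin n × Fin n × Fin n × Fin n)) :=
  (Finset.univ.filter fun p => H.Adj p.1 p.2.1 ∧ H.Adj p.2.2.1 p.2.2.2) ×ˢ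
  (Finset.univ.filter fun q => ∃ P ∈ D, ¬ IsKClique t P ∧
    s(q.1, q.2.1) ∈ P ∧ s(q.2.2.1, q.2.2.2) ∈ P)

noncomputable def I3 (t : ℕ) (D : Finset (Finset (Sym2 (Fin n)))) (H : SimpleGraph (Fin n)) :
    Finset ((Fin n × Fin n × Fin n × Fin n) × (Fin n × Fin n × Fin n × Fin n)) :=
  (Finset.univ.filter fun p => H.Adj p.1 p.2.1 ∧ H.Adj p.1 p.2.2.1 ∧ H.Adj p.1 p.2.2.2) ×ˢ
  (Finset.univ.filter fun q => ∃ P ∈ D, IsKClique t P ∧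
    s(q.1, q.2.1) ∈ P ∧ s(q.1, q.2.2.1) ∈ P ∧ s(q.1, q.2.2.2) ∈ P)

noncomputable def I4 (t : ℕ) (D : Finset (Finset (Sym2 (Fin n)))) (H : SimpleGraph (Fin n)) :
    Finset ((Fin n × Fin n × Fin n × Fin n) × (Fin n × Fin n × Fin n × Fin n)) :=
  (Finset.univ.filter fun p => H.Adj p.1 p.2.1 ∧ H.Adj p.2.1 p.2.2.1 ∧ H.Adj p.2.2.1 p.2.2.2) ×ˢ
  (Finset.univ.filter fun q => ∃ P ∈ D, IsKClique t P ∧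
    s(q.1, q.2.1) ∈ P ∧ s(q.2.1, q.2.2.1) ∈ P ∧ s(q.2.2.1, q.2.2.2) ∈ P)

noncomputable def I5 (t : ℕ) (D : Finset (Finset (Sym2 (Fin n)))) (H : SimpleGraph (Fin n)) :
    Finset ((Fin n × Fin n × Fin n × Fin n × Fin n) × (Fin n × Fin n × Fin n × Fin n × Fin n)) :=
  (Finset.univ.filter fun p => H.Adj p.1 p.2.1 ∧ H.Adj p.2.1 p.2.2.1 ∧
    H.Adj p.2.2.2.1 p.2.2.2.2) ×ˢ
  (Finset.univ.filter fun q => ∃ P ∈ D, IsKClique t P ∧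
    s(q.1, q.2.1) ∈ P ∧ s(q.2.1, q.2.2.1) ∈ P ∧ s(q.2.2.2.1, q.2.2.2.2) ∈ P)

noncomputable def I6 (t : ℕ) (D : Finset (Finset (Sym2 (Fin n)))) (H : SimpleGraph (Fin n)) :
    Finset ((Fin n × Fin n × Fin n × Fin n × Fin n × Fin n) ×
      (Fin n × Fin n × Fin n × Fin n × Fin n × Fin n)) :=
  (Finset.univ.filter fun p => H.Adj p.1 p.2.1 ∧ H.Adj p.2.2.1 p.2.2.2.1 ∧
    H.Adj p.2.2.2.2.1 p.2.2.2.2.2) ×ˢ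
  (Finset.univ.filter fun q => ∃ P ∈ D, IsKClique t P ∧
    s(q.1, q.2.1) ∈ P ∧ s(q.2.2.1, q.2.2.2.1) ∈ P ∧ s(q.2.2.2.2.1, q.2.2.2.2.2) ∈ P)

end Scen

section Extract
variable {n t : ℕ} {D : Finset (Finset (Sym2 (Fin n)))} {H : SimpleGraph (Fin n)}
  {π : Equiv.Perm (Fin n)}

lemma mem_Bset {P : Finset (Sym2 (Fin n))} (hPD : P ∈ D) (hnKt : ¬ IsKClique t P)
    {e : Sym2 (Fin n)} (he : e ∈ P) : e ∈ Bset t D := by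
  classical
  exact Finset.mem_biUnion.mpr ⟨P, Finset.mem_filter.mpr ⟨hPD, hnKt⟩, he⟩

lemma caseA {P : Finset (Sym2 (Fin n))} (hPD : P ∈ D) (hnKt : ¬ IsKClique t P)
    {e f : Sym2 (Fin n)} (he : e ∈ H.edgeSet) (hf : f ∈ H.edgeSet) (hef : e ≠ f)
    (heP : Sym2.map π e ∈ P) (hfP : Sym2.map π f ∈ P) :
    Sc (I1 t D H) tup3 π ∨ Sc (I2 t D H) tup4 π := by
  classical
  by_cases hshare : ∃ v, v ∈ e ∧ v ∈ f
  · obtain ⟨v, hve, hvf⟩ := hshare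
    left
    have hea : s(v, (Sym2.Mem.other hve)) = e := Sym2.other_spec hve
    have hfb : s(v, (Sym2.Mem.other hvf)) = f := Sym2.other_spec hvf
    have hadj1 : H.Adj v (Sym2.Mem.other hve) := H.mem_edgeSet.mp (by rw [hea]; exact he)
    have hadj2 : H.Adj v (Sym2.Mem.other hvf) := H.mem_edgeSet.mp (by rw [hfb]; exact hf)
    have hab : (Sym2.Mem.other hve) ≠ (Sym2.Mem.other hvf) := by
      intro hcontra; apply hef; rw [← hea, ← hfb, hcontra]
    refine ⟨((v, (Sym2.Mem.other hve), (Sym2.Mem.other hvf)), (π v, π (Sym2.Mem.other hve), π (Sym2.Mem.other hvf))), ?_, ?_, ?_⟩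
    · rw [I1, Finset.mem_product]
      constructor
      · simp only [Finset.mem_filter, Finset.mem_univ, true_and]
        exact ⟨hadj1, hadj2⟩
      · simp only [Finset.mem_filter, Finset.mem_univ, true_and]
        constructor
        · have h1 : Sym2.map π e ∈ Bset t D := mem_Bset hPD hnKt heP
          rw [← hea, Sym2.map_pair_eq] at h1
          exact h1
        · have h1 : Sym2.map π f ∈ Bset t D := mem_Bset hPD hnKt hfP
          rw [← hfb, Sym2.map_pair_eq] at h1
          exact h1
    · exact inj_tup3 hadj1.ne hadj2.ne hab
    · intro j; fin_cases j <;> rfl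
  · obtain ⟨x, y, rfl⟩ := sym2_rep e
    obtain ⟨z, w, rfl⟩ := sym2_rep f
    right
    have hadj1 : H.Adj x y := H.mem_edgeSet.mp he
    have hadj2 : H.Adj z w := H.mem_edgeSet.mp hf
    have hxz : x ≠ z := fun hh => hshare
      ⟨x, Sym2.mem_mk_left _ _, hh ▸ Sym2.mem_mk_left _ _⟩
    have hxw : x ≠ w := fun hh => hshare
      ⟨x, Sym2.mem_mk_left _ _, hh ▸ Sym2.mem_mk_right _ _⟩
    have hyz : y ≠ z := fun hh => hshare
      ⟨y, Sym2.mem_mk_right _ _, hh ▸ Sym2.mem_mk_left _ _⟩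
    have hyw : y ≠ w := fun hh => hshare
      ⟨y, Sym2.mem_mk_right _ _, hh ▸ Sym2.mem_mk_right _ _⟩
    refine ⟨((x, y, z, w), (π x, π y, π z, π w)), ?_, ?_, ?_⟩
    · rw [I2, Finset.mem_product]
      constructor
      · simp only [Finset.mem_filter, Finset.mem_univ, true_and]
        exact ⟨hadj1, hadj2⟩
      · simp only [Finset.mem_filter, Finset.mem_univ, true_and]
        rw [Sym2.map_pair_eq] at heP hfP
        exact ⟨P, hPD, hnKt, heP, hfP⟩
    · exact inj_tup4 hadj1.ne hxz hxw hyz hyw hadj2.ne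
    · intro j; fin_cases j <;> rfl

lemma caseStar {P : Finset (Sym2 (Fin n))} (hPD : P ∈ D) (hKt : IsKClique t P)
    {e f g : Sym2 (Fin n)} (he : e ∈ H.edgeSet) (hf : f ∈ H.edgeSet) (hg : g ∈ H.edgeSet)
    (hef : e ≠ f) (hge : g ≠ e) (hgf : g ≠ f)
    (heP : Sym2.map π e ∈ P) (hfP : Sym2.map π f ∈ P) (hgP : Sym2.map π g ∈ P)
    (h1 : ∃ v, v ∈ e ∧ v ∈ f) (h2 : ∃ v, v ∈ e ∧ v ∈ g) (h3 : ∃ v, v ∈ f ∧ v ∈ g)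
    (hnt : ¬ ∃ x y z : Fin n, e = s(x, y) ∧ f = s(y, z) ∧ g = s(x, z)) :
    Sc (I3 t D H) tup4 π := by
  classical
  obtain ⟨v, hve, hvf⟩ := h1
  have hea : s(v, (Sym2.Mem.other hve)) = e := Sym2.other_spec hve
  have hfb : s(v, (Sym2.Mem.other hvf)) = f := Sym2.other_spec hvf
  set a := (Sym2.Mem.other hve) with ha
  set b := (Sym2.Mem.other hvf) with hb
  have hadj1 : H.Adj v a := H.mem_edgeSet.mp (by rw [hea]; exact he)
  have hadj2 : H.Adj v b := H.mem_edgeSet.mp (by rw [hfb]; exact hf)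
  have hab : a ≠ b := by
    intro hcontra; apply hef; rw [← hea, ← hfb, hcontra]
  by_cases hvg : v ∈ g
  · have hgc : s(v, (Sym2.Mem.other hvg)) = g := Sym2.other_spec hvg
    set c := (Sym2.Mem.other hvg) with hc
    have hadj3 : H.Adj v c := H.mem_edgeSet.mp (by rw [hgc]; exact hg)
    have hca : c ≠ a := by
      intro hcontra; apply hge; rw [← hgc, ← hea, hcontra]
    have hcb : c ≠ b := by
      intro hcontra; apply hgf; rw [← hgc, ← hfb, hcontra]
    refine ⟨((v, a, b, c), (π v, π a, π b, π c)), ?_, ?_, ?_⟩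
    · rw [I3, Finset.mem_product]
      constructor
      · simp only [Finset.mem_filter, Finset.mem_univ, true_and]
        exact ⟨hadj1, hadj2, hadj3⟩
      · simp only [Finset.mem_filter, Finset.mem_univ, true_and]
        rw [← hea, Sym2.map_pair_eq] at heP
        rw [← hfb, Sym2.map_pair_eq] at hfP
        rw [← hgc, Sym2.map_pair_eq] at hgP
        exact ⟨P, hPD, hKt, heP, hfP, hgP⟩
    · exact inj_tup4 hadj1.ne hadj2.ne hadj3.ne hab hca.symm hcb.symm
    · intro j; fin_cases j <;> rfl
  · exfalso
    -- g must be s(a, b), giving a triangle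
    obtain ⟨u, hug_e, hug⟩ := h2
    have hua : u = a := by
      rw [← hea] at hug_e
      rcases Sym2.mem_iff.mp hug_e with h | h
      · exact absurd (h ▸ hug) hvg
      · exact h
    obtain ⟨u', hu'f, hu'g⟩ := h3
    have hub : u' = b := by
      rw [← hfb] at hu'f
      rcases Sym2.mem_iff.mp hu'f with h | h
      · exact absurd (h ▸ hu'g) hvg
      · exact h
    have hgab : g = s(a, b) :=
      (Sym2.mem_and_mem_iff hab).mp ⟨hua ▸ hug, hub ▸ hu'g⟩
    apply hnt
    exact ⟨a, v, b, by rw [← hea, Sym2.eq_swap], hfb.symm, hgab⟩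

lemma caseDisj {P : Finset (Sym2 (Fin n))} (hPD : P ∈ D) (hKt : IsKClique t P)
    {e f g : Sym2 (Fin n)} (he : e ∈ H.edgeSet) (hf : f ∈ H.edgeSet) (hg : g ∈ H.edgeSet)
    (hge : g ≠ e) (hgf : g ≠ f)
    (heP : Sym2.map π e ∈ P) (hfP : Sym2.map π f ∈ P) (hgP : Sym2.map π g ∈ P)
    (hdisj : ¬ ∃ v, v ∈ e ∧ v ∈ f) :
    Sc (I4 t D H) tup4 π ∨ Sc (I5 t D H) tup5 π ∨ Sc (I6 t D H) tup6 π := by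
  classical
  by_cases hge' : ∃ v, v ∈ g ∧ v ∈ e
  · obtain ⟨v1, hv1g, hv1e⟩ := hge'
    have hea : s(v1, (Sym2.Mem.other hv1e)) = e := Sym2.other_spec hv1e
    set a := (Sym2.Mem.other hv1e) with ha
    have hadj_e : H.Adj v1 a := H.mem_edgeSet.mp (by rw [hea]; exact he)
    by_cases hgf' : ∃ v, v ∈ g ∧ v ∈ f
    · -- path a - v1 - v2 - b
      left
      obtain ⟨v2, hv2g, hv2f⟩ := hgf'
      have hfb : s(v2, (Sym2.Mem.other hv2f)) = f := Sym2.other_spec hv2f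
      set b := (Sym2.Mem.other hv2f) with hb
      have hadj_f : H.Adj v2 b := H.mem_edgeSet.mp (by rw [hfb]; exact hf)
      have hv12 : v1 ≠ v2 := fun hh => hdisj ⟨v1, hv1e, hh ▸ hv2f⟩
      have hgv : g = s(v1, v2) := (Sym2.mem_and_mem_iff hv12).mp ⟨hv1g, hv2g⟩
      have hadj_g : H.Adj v1 v2 := H.mem_edgeSet.mp (by rw [← hgv]; exact hg)
      have hav2 : a ≠ v2 := fun hh => hdisj ⟨a, by rw [← hea]; exact Sym2.mem_mk_right _ _,
        hh ▸ hv2f⟩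
      have hab : a ≠ b := fun hh => hdisj ⟨a, by rw [← hea]; exact Sym2.mem_mk_right _ _,
        by rw [← hfb]; exact hh ▸ Sym2.mem_mk_right _ _⟩
      have hv1b : v1 ≠ b := fun hh => hdisj ⟨v1, hv1e,
        by rw [← hfb]; exact hh ▸ Sym2.mem_mk_right _ _⟩
      refine ⟨((a, v1, v2, b), (π a, π v1, π v2, π b)), ?_, ?_, ?_⟩
      · rw [I4, Finset.mem_product]
        constructor
        · simp only [Finset.mem_filter, Finset.mem_univ, true_and]
          exact ⟨hadj_e.symm, hadj_g, hadj_f⟩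
        · simp only [Finset.mem_filter, Finset.mem_univ, true_and]
          refine ⟨P, hPD, hKt, ?_, ?_, ?_⟩
          · have := heP; rw [← hea, Sym2.map_pair_eq] at this
            rw [Sym2.eq_swap]; exact this
          · have := hgP; rwa [hgv, Sym2.map_pair_eq] at this
          · have := hfP; rwa [← hfb, Sym2.map_pair_eq] at this
      · exact inj_tup4 hadj_e.ne.symm hav2 hab hv12 hv1b hadj_f.ne
      · intro j; fin_cases j <;> rfl
    · -- cherry a - v1 - q  plus edge f
      right; left
      have hgq : s(v1, (Sym2.Mem.other hv1g)) = g := Sym2.other_spec hv1g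
      set q := (Sym2.Mem.other hv1g) with hq
      have hadj_g : H.Adj v1 q := H.mem_edgeSet.mp (by rw [hgq]; exact hg)
      have hqf : ∀ u, u ∈ f → q ≠ u := by
        intro u hu hh
        exact hgf' ⟨q, by rw [← hgq]; exact Sym2.mem_mk_right _ _, hh ▸ hu⟩
      have hqa : q ≠ a := by
        intro hh; apply hge; rw [← hgq, ← hea, hh]
      obtain ⟨z, w, rfl⟩ := sym2_rep f
      have hadj_f : H.Adj z w := H.mem_edgeSet.mp hf
      have haz : a ≠ z := fun hh => hdisj ⟨a, by rw [← hea]; exact Sym2.mem_mk_right _ _,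
        hh ▸ Sym2.mem_mk_left _ _⟩
      have haw : a ≠ w := fun hh => hdisj ⟨a, by rw [← hea]; exact Sym2.mem_mk_right _ _,
        hh ▸ Sym2.mem_mk_right _ _⟩
      have hv1z : v1 ≠ z := fun hh => hdisj ⟨v1, hv1e, hh ▸ Sym2.mem_mk_left _ _⟩
      have hv1w : v1 ≠ w := fun hh => hdisj ⟨v1, hv1e, hh ▸ Sym2.mem_mk_right _ _⟩
      refine ⟨((a, v1, q, z, w), (π a, π v1, π q, π z, π w)), ?_, ?_, ?_⟩
      · rw [I5, Finset.mem_product]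
        constructor
        · simp only [Finset.mem_filter, Finset.mem_univ, true_and]
          exact ⟨hadj_e.symm, hadj_g, hadj_f⟩
        · simp only [Finset.mem_filter, Finset.mem_univ, true_and]
          refine ⟨P, hPD, hKt, ?_, ?_, ?_⟩
          · have := heP; rw [← hea, Sym2.map_pair_eq] at this
            rw [Sym2.eq_swap]; exact this
          · have := hgP; rwa [← hgq, Sym2.map_pair_eq] at this
          · have := hfP; rwa [Sym2.map_pair_eq] at this
      · exact inj_tup5 hadj_e.ne.symm hqa.symm haz haw hadj_g.ne
          hv1z hv1w (hqf z (Sym2.mem_mk_left _ _)) (hqf w (Sym2.mem_mk_right _ _)) hadj_f.ne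
      · intro j; fin_cases j <;> rfl
  · by_cases hgf' : ∃ v, v ∈ g ∧ v ∈ f
    · -- cherry b - v2 - q  plus edge e
      right; left
      obtain ⟨v2, hv2g, hv2f⟩ := hgf'
      have hfb : s(v2, (Sym2.Mem.other hv2f)) = f := Sym2.other_spec hv2f
      set b := (Sym2.Mem.other hv2f) with hb
      have hadj_f : H.Adj v2 b := H.mem_edgeSet.mp (by rw [hfb]; exact hf)
      have hgq : s(v2, (Sym2.Mem.other hv2g)) = g := Sym2.other_spec hv2g
      set q := (Sym2.Mem.other hv2g) with hq
      have hadj_g : H.Adj v2 q := H.mem_edgeSet.mp (by rw [hgq]; exact hg)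
      have hqe : ∀ u, u ∈ e → q ≠ u := by
        intro u hu hh
        exact hge' ⟨q, by rw [← hgq]; exact Sym2.mem_mk_right _ _, hh ▸ hu⟩
      have hqb : q ≠ b := by
        intro hh; apply hgf; rw [← hgq, ← hfb, hh]
      obtain ⟨z, w, rfl⟩ := sym2_rep e
      have hadj_e : H.Adj z w := H.mem_edgeSet.mp he
      have hbz : b ≠ z := fun hh => hdisj ⟨b, hh ▸ Sym2.mem_mk_left _ _,
        by rw [← hfb]; exact Sym2.mem_mk_right _ _⟩
      have hbw : b ≠ w := fun hh => hdisj ⟨b, hh ▸ Sym2.mem_mk_right _ _,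
        by rw [← hfb]; exact Sym2.mem_mk_right _ _⟩
      have hv2z : v2 ≠ z := fun hh => hdisj ⟨v2, hh ▸ Sym2.mem_mk_left _ _, hv2f⟩
      have hv2w : v2 ≠ w := fun hh => hdisj ⟨v2, hh ▸ Sym2.mem_mk_right _ _, hv2f⟩
      refine ⟨((b, v2, q, z, w), (π b, π v2, π q, π z, π w)), ?_, ?_, ?_⟩
      · rw [I5, Finset.mem_product]
        constructor
        · simp only [Finset.mem_filter, Finset.mem_univ, true_and]
          exact ⟨hadj_f.symm, hadj_g, hadj_e⟩
        · simp only [Finset.mem_filter, Finset.mem_univ, true_and]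
          refine ⟨P, hPD, hKt, ?_, ?_, ?_⟩
          · have := hfP; rw [← hfb, Sym2.map_pair_eq] at this
            rw [Sym2.eq_swap]; exact this
          · have := hgP; rwa [← hgq, Sym2.map_pair_eq] at this
          · have := heP; rwa [Sym2.map_pair_eq] at this
      · exact inj_tup5 hadj_f.ne.symm hqb.symm hbz hbw hadj_g.ne
          hv2z hv2w (hqe z (Sym2.mem_mk_left _ _)) (hqe w (Sym2.mem_mk_right _ _)) hadj_e.ne
      · intro j; fin_cases j <;> rfl
    · -- three pairwise disjoint edges
      right; right
      obtain ⟨x, y, rfl⟩ := sym2_rep e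
      obtain ⟨z, w, rfl⟩ := sym2_rep f
      obtain ⟨p', q', rfl⟩ := sym2_rep g
      have hadj_e : H.Adj x y := H.mem_edgeSet.mp he
      have hadj_f : H.Adj z w := H.mem_edgeSet.mp hf
      have hadj_g : H.Adj p' q' := H.mem_edgeSet.mp hg
      have hxz : x ≠ z := fun hh => hdisj ⟨x, Sym2.mem_mk_left _ _, hh ▸ Sym2.mem_mk_left _ _⟩
      have hxw : x ≠ w := fun hh => hdisj ⟨x, Sym2.mem_mk_left _ _, hh ▸ Sym2.mem_mk_right _ _⟩
      have hyz : y ≠ z := fun hh => hdisj ⟨y, Sym2.mem_mk_right _ _, hh ▸ Sym2.mem_mk_left _ _⟩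
      have hyw : y ≠ w := fun hh => hdisj ⟨y, Sym2.mem_mk_right _ _, hh ▸ Sym2.mem_mk_right _ _⟩
      have hpx : p' ≠ x := fun hh => hge' ⟨p', Sym2.mem_mk_left _ _, hh ▸ Sym2.mem_mk_left _ _⟩
      have hpy : p' ≠ y := fun hh => hge' ⟨p', Sym2.mem_mk_left _ _, hh ▸ Sym2.mem_mk_right _ _⟩
      have hqx : q' ≠ x := fun hh => hge' ⟨q', Sym2.mem_mk_right _ _, hh ▸ Sym2.mem_mk_left _ _⟩
      have hqy : q' ≠ y := fun hh => hge' ⟨q', Sym2.mem_mk_right _ _, hh ▸ Sym2.mem_mk_right _ _⟩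
      have hpz : p' ≠ z := fun hh => hgf' ⟨p', Sym2.mem_mk_left _ _, hh ▸ Sym2.mem_mk_left _ _⟩
      have hpw : p' ≠ w := fun hh => hgf' ⟨p', Sym2.mem_mk_left _ _, hh ▸ Sym2.mem_mk_right _ _⟩
      have hqz : q' ≠ z := fun hh => hgf' ⟨q', Sym2.mem_mk_right _ _, hh ▸ Sym2.mem_mk_left _ _⟩
      have hqw : q' ≠ w := fun hh => hgf' ⟨q', Sym2.mem_mk_right _ _, hh ▸ Sym2.mem_mk_right _ _⟩
      refine ⟨((x, y, z, w, p', q'), (π x, π y, π z, π w, π p', π q')), ?_, ?_, ?_⟩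
      · rw [I6, Finset.mem_product]
        constructor
        · simp only [Finset.mem_filter, Finset.mem_univ, true_and]
          exact ⟨hadj_e, hadj_f, hadj_g⟩
        · simp only [Finset.mem_filter, Finset.mem_univ, true_and]
          rw [Sym2.map_pair_eq] at heP hfP hgP
          exact ⟨P, hPD, hKt, heP, hfP, hgP⟩
      · exact inj_tup6 hadj_e.ne hxz hxw hpx.symm hqx.symm hyz hyw hpy.symm hqy.symm
          hadj_f.ne hpz.symm hqz.symm hpw.symm hqw.symm hadj_g.ne
      · intro j; fin_cases j <;> rfl

lemma atypical_cases (hat : Atypical t D H π) :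
    Sc (I1 t D H) tup3 π ∨ Sc (I2 t D H) tup4 π ∨ Sc (I3 t D H) tup4 π ∨
    Sc (I4 t D H) tup4 π ∨ Sc (I5 t D H) tup5 π ∨ Sc (I6 t D H) tup6 π := by
  classical
  rcases hat with ⟨P, hPD, hnKt, e, he, f, hf, hef, heP, hfP⟩ |
    ⟨P, hPD, hKt, e, he, f, hf, g, hg, hef, heg, hfg, heP, hfP, hgP, hnt⟩
  · rcases caseA hPD hnKt he hf hef heP hfP with h | h
    · exact Or.inl h
    · exact Or.inr (Or.inl h)
  · by_cases h1 : ∃ v, v ∈ e ∧ v ∈ f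
    · by_cases h2 : ∃ v, v ∈ e ∧ v ∈ g
      · by_cases h3 : ∃ v, v ∈ f ∧ v ∈ g
        · exact Or.inr (Or.inr (Or.inl
            (caseStar hPD hKt he hf hg hef heg.symm hfg.symm heP hfP hgP h1 h2 h3 hnt)))
        · rcases caseDisj hPD hKt hf hg he hef heg hfP hgP heP h3 with h | h | h
          · exact Or.inr (Or.inr (Or.inr (Or.inl h)))
          · exact Or.inr (Or.inr (Or.inr (Or.inr (Or.inl h))))
          · exact Or.inr (Or.inr (Or.inr (Or.inr (Or.inr h))))
      · rcases caseDisj hPD hKt he hg hf hef.symm hfg heP hgP hfP h2 with h | h | h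
        · exact Or.inr (Or.inr (Or.inr (Or.inl h)))
        · exact Or.inr (Or.inr (Or.inr (Or.inr (Or.inl h))))
        · exact Or.inr (Or.inr (Or.inr (Or.inr (Or.inr h))))
    · rcases caseDisj hPD hKt he hf hg heg.symm hfg.symm heP hfP hgP h1 with h | h | h
      · exact Or.inr (Or.inr (Or.inr (Or.inl h)))
      · exact Or.inr (Or.inr (Or.inr (Or.inr (Or.inl h))))
      · exact Or.inr (Or.inr (Or.inr (Or.inr (Or.inr h))))

end Extract

set_option maxHeartbeats 1000000 in
/-- Lemma 2.6: if `D` is an adjusted `t`-decomposition of `K_n`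
(`t ≥ 3`, `t, n` odd) and `H` is a graph on `n` vertices of maximum degree at most `d`,
then at most `11·d³·t⁴·(n-1)!` of the `n!` labeled copies of `H` are atypical. -/
theorem count_atypical_copies (t : ℕ) (htodd : Odd t) (ht : 3 ≤ t)
    (n : ℕ) (hnodd : Odd n)
    (D : Finset (Finset (Sym2 (Fin n)))) (hD : IsAdjustedDecomp t n D)
    (H : SimpleGraph (Fin n)) (d : ℕ) (hH : ∀ v : Fin n, (H.neighborSet v).ncard ≤ d) :
    Nat.card {π : Equiv.Perm (Fin n) // Atypical t D H π} ≤
      11 * d ^ 3 * t ^ 4 * (n - 1).factorial := by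
  classical
  have hn1 : 1 ≤ n := by
    obtain ⟨k, hk⟩ := hnodd; omega
  have hcard : Nat.card {π : Equiv.Perm (Fin n) // Atypical t D H π}
      = (Finset.univ.filter fun π : Equiv.Perm (Fin n) => Atypical t D H π).card := by
    rw [Nat.card_eq_fintype_card, Fintype.card_subtype]
  rw [hcard]
  obtain ⟨hdec, hstruct, hdeg, h3, h4, h5⟩ := hD
  by_cases hd0 : d = 0
  · have hempty : (Finset.univ.filter fun π : Equiv.Perm (Fin n) => Atypical t D H π) = ∅ := by
      apply Finset.filter_false_of_mem
      intro π _ hat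
      have hedge : ∃ e, e ∈ H.edgeSet := by
        rcases hat with ⟨P, -, -, e, he, -⟩ | ⟨P, -, -, e, he, -⟩ <;> exact ⟨e, he⟩
      obtain ⟨e, he⟩ := hedge
      obtain ⟨x, y, rfl⟩ := sym2_rep e
      have hadj : H.Adj x y := H.mem_edgeSet.mp he
      have hpos : 0 < (H.neighborSet x).ncard :=
        (Set.ncard_pos (Set.toFinite _)).mpr ⟨y, hadj⟩
      have := hH x
      omega
    rw [hempty]
    simp
  by_cases hsmall : n ≤ 11 * d ^ 3 * t ^ 4
  · calc (Finset.univ.filter fun π : Equiv.Perm (Fin n) => Atypical t D H π).card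
        ≤ (Finset.univ : Finset (Equiv.Perm (Fin n))).card := Finset.card_filter_le _ _
      _ = n.factorial := by rw [Finset.card_univ, Fintype.card_perm, Fintype.card_fin]
      _ = n * (n - 1).factorial := by
          have e1 : n = (n - 1) + 1 := by omega
          rw [e1, Nat.factorial_succ, ← e1]
      _ ≤ 11 * d ^ 3 * t ^ 4 * (n - 1).factorial :=
          Nat.mul_le_mul_right _ hsmall
  -- main case
  have hd1 : 1 ≤ d := by omega
  have hd3 : 1 ≤ d ^ 3 := Nat.pow_pos (show 0 < d by omega)
  have ht4 : 81 ≤ t ^ 4 := by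
    calc (81 : ℕ) = 3 ^ 4 := by norm_num
      _ ≤ t ^ 4 := Nat.pow_le_pow_left ht 4
  have hbig : 11 * d ^ 3 * t ^ 4 + 1 ≤ n := by omega
  have hn : 892 ≤ n := by
    have : 11 * 1 * 81 ≤ 11 * d ^ 3 * t ^ 4 :=
      Nat.mul_le_mul (Nat.mul_le_mul (le_refl 11) hd3) ht4
    omega
  set L := (n - 1).factorial with hL
  -- six scenario filters
  set F1 := Finset.univ.filter (Sc (I1 t D H) tup3) with hF1
  set F2 := Finset.univ.filter (Sc (I2 t D H) tup4) with hF2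
  set F3 := Finset.univ.filter (Sc (I3 t D H) tup4) with hF3
  set F4 := Finset.univ.filter (Sc (I4 t D H) tup4) with hF4
  set F5 := Finset.univ.filter (Sc (I5 t D H) tup5) with hF5
  set F6 := Finset.univ.filter (Sc (I6 t D H) tup6) with hF6
  have hsub : (Finset.univ.filter fun π : Equiv.Perm (Fin n) => Atypical t D H π)
      ⊆ F1 ∪ (F2 ∪ (F3 ∪ (F4 ∪ (F5 ∪ F6)))) := by
    intro π hπ
    have hat := (Finset.mem_filter.mp hπ).2
    rcases atypical_cases hat with h | h | h | h | h | h <;>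
      simp only [Finset.mem_union, hF1, hF2, hF3, hF4, hF5, hF6, Finset.mem_filter,
        Finset.mem_univ, true_and] <;> tauto
  have hsum : (Finset.univ.filter fun π : Equiv.Perm (Fin n) => Atypical t D H π).card
      ≤ F1.card + (F2.card + (F3.card + (F4.card + (F5.card + F6.card)))) := by
    refine le_trans (Finset.card_le_card hsub) ?_
    refine le_trans (Finset.card_union_le _ _) (Nat.add_le_add_left ?_ _)
    refine le_trans (Finset.card_union_le _ _) (Nat.add_le_add_left ?_ _)
    refine le_trans (Finset.card_union_le _ _) (Nat.add_le_add_left ?_ _)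
    refine le_trans (Finset.card_union_le _ _) (Nat.add_le_add_left ?_ _)
    exact Finset.card_union_le _ _
  -- per-scenario covering bounds
  have s1 : F1.card ≤ (I1 t D H).card * (n - 3).factorial :=
    cover_le (I1 t D H) (fun i => tup3 i.1) (fun i => tup3 i.2) _ (fun π h => h)
  have s2 : F2.card ≤ (I2 t D H).card * (n - 4).factorial :=
    cover_le (I2 t D H) (fun i => tup4 i.1) (fun i => tup4 i.2) _ (fun π h => h)
  have s3 : F3.card ≤ (I3 t D H).card * (n - 4).factorial :=
    cover_le (I3 t D H) (fun i => tup4 i.1) (fun i => tup4 i.2) _ (fun π h => h)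
  have s4 : F4.card ≤ (I4 t D H).card * (n - 4).factorial :=
    cover_le (I4 t D H) (fun i => tup4 i.1) (fun i => tup4 i.2) _ (fun π h => h)
  have s5 : F5.card ≤ (I5 t D H).card * (n - 5).factorial :=
    cover_le (I5 t D H) (fun i => tup5 i.1) (fun i => tup5 i.2) _ (fun π h => h)
  have s6 : F6.card ≤ (I6 t D H).card * (n - 6).factorial :=
    cover_le (I6 t D H) (fun i => tup6 i.1) (fun i => tup6 i.2) _ (fun π h => h)
  -- index-set cardinality bounds
  have hBnd : ∀ e ∈ Bset t D, ¬ e.IsDiag := by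
    intro e heB
    rw [Bset] at heB
    obtain ⟨P, hPf, heP⟩ := Finset.mem_biUnion.mp heB
    exact (hdec.1 P (Finset.mem_filter.mp hPf).1).2 e heP
  have hBdeg : ∀ u : Fin n, ((Bset t D).filter fun e => u ∈ e).card ≤ 3 * t - 5 := by
    intro u; rw [Bset]; exact hdeg u
  have i1 : (I1 t D H).card ≤ (n * (d * d)) * (n * ((3 * t - 5) * (3 * t - 5))) := by
    rw [I1, Finset.card_product]
    exact Nat.mul_le_mul (cardJH1 hH) (cardJB1 (Bset t D) hBnd hBdeg)
  have i2 : (I2 t D H).card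
      ≤ ((n * d) * (n * d)) * (6 * (n * (t - 3)) + 64 * (t - 3) + 16 * t ^ 4 * (t - 1)) := by
    rw [I2, Finset.card_product]
    exact Nat.mul_le_mul (cardJH2 hH) (cardJB2 hdec hstruct h3 h4 h5)
  have i3 : (I3 t D H).card ≤ (n * (d * (d * d))) * ((n * n) * (t * t)) := by
    rw [I3, Finset.card_product]
    exact Nat.mul_le_mul (cardJH3s hH) (cardJB3s hdec)
  have i4 : (I4 t D H).card ≤ (n * (d * (d * d))) * ((n * n) * (t * t)) := by
    rw [I4, Finset.card_product]
    exact Nat.mul_le_mul (cardJH4p hH) (cardJB4p hdec)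
  have i5 : (I5 t D H).card ≤ ((n * (d * d)) * (n * d)) * ((n * n) * (t * (t * t))) := by
    rw [I5, Finset.card_product]
    exact Nat.mul_le_mul (cardJH5 hH) (cardJB5 hdec)
  have i6 : (I6 t D H).card
      ≤ ((n * d) * ((n * d) * (n * d))) * ((n * n) * (t * (t * (t * t)))) := by
    rw [I6, Finset.card_product]
    exact Nat.mul_le_mul (cardJH6 hH) (cardJB6 hdec)
  -- factorial estimates
  have e3 : n ^ 2 * (n - 3).factorial ≤ 2 * L := fact3le n hn
  have e4 : n ^ 3 * (n - 4).factorial ≤ 2 * L := fact4le n hn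
  have e5 : n ^ 4 * (n - 5).factorial ≤ 2 * L := fact5le n hn
  have e6 : n ^ 5 * (n - 6).factorial ≤ 2 * L := fact6le n hn
  -- term bounds
  have T1 : F1.card ≤ 18 * ((d * d) * (t * t)) * L := by
    refine le_trans s1 (le_trans (Nat.mul_le_mul_right _ i1) ?_)
    have step : (n * (d * d)) * (n * ((3 * t - 5) * (3 * t - 5))) * (n - 3).factorial
        = ((d * d) * ((3 * t - 5) * (3 * t - 5))) * (n ^ 2 * (n - 3).factorial) := by ring
    rw [step]
    calc ((d * d) * ((3 * t - 5) * (3 * t - 5))) * (n ^ 2 * (n - 3).factorial)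
        ≤ ((d * d) * ((3 * t) * (3 * t))) * (2 * L) := by
          refine Nat.mul_le_mul (Nat.mul_le_mul_left _ ?_) e3
          exact Nat.mul_le_mul (by omega) (by omega)
      _ = 18 * ((d * d) * (t * t)) * L := by ring
  have T2 : F2.card ≤ 140 * ((t - 3) * (d * d)) * L + 3 * t * L := by
    have hJB2' : 6 * (n * (t - 3)) + 64 * (t - 3) + 16 * t ^ 4 * (t - 1)
        ≤ 70 * (n * (t - 3)) + 16 * t ^ 4 * (t - 1) := by
      have : 64 * (t - 3) ≤ 64 * (n * (t - 3)) :=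
        Nat.mul_le_mul_left _ (Nat.le_mul_of_pos_left _ (by omega))
      omega
    have step1 : F2.card ≤ ((n * d) * (n * d)) *
        (70 * (n * (t - 3)) + 16 * t ^ 4 * (t - 1)) * (n - 4).factorial := by
      refine le_trans s2 (Nat.mul_le_mul_right _ ?_)
      exact le_trans i2 (Nat.mul_le_mul_left _ hJB2')
    have step2 : ((n * d) * (n * d)) *
        (70 * (n * (t - 3)) + 16 * t ^ 4 * (t - 1)) * (n - 4).factorial
        = 70 * ((t - 3) * (d * d)) * (n ^ 3 * (n - 4).factorial)
          + 16 * t ^ 4 * (t - 1) * (d * d) * (n ^ 2 * (n - 4).factorial) := by ring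
    have pcA : 70 * ((t - 3) * (d * d)) * (n ^ 3 * (n - 4).factorial)
        ≤ 140 * ((t - 3) * (d * d)) * L := by
      calc 70 * ((t - 3) * (d * d)) * (n ^ 3 * (n - 4).factorial)
          ≤ 70 * ((t - 3) * (d * d)) * (2 * L) := Nat.mul_le_mul_left _ e4
        _ = 140 * ((t - 3) * (d * d)) * L := by ring
    have pcB : 16 * t ^ 4 * (t - 1) * (d * d) * (n ^ 2 * (n - 4).factorial)
        ≤ 3 * t * L := by
      have hmul : n * (16 * t ^ 4 * (t - 1) * (d * d) * (n ^ 2 * (n - 4).factorial))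
          ≤ n * (3 * t * L) := by
        calc n * (16 * t ^ 4 * (t - 1) * (d * d) * (n ^ 2 * (n - 4).factorial))
            = 16 * t ^ 4 * (t - 1) * (d * d) * (n ^ 3 * (n - 4).factorial) := by ring
          _ ≤ 16 * t ^ 4 * (t - 1) * (d * d) * (2 * L) := Nat.mul_le_mul_left _ e4
          _ ≤ 16 * t ^ 4 * t * (d * d) * (2 * L) := by
              refine Nat.mul_le_mul_right _ (Nat.mul_le_mul_right _ ?_)
              exact Nat.mul_le_mul_left _ (by omega)
          _ = 32 * (d * d) * (t ^ 4 * t) * L := by ring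
          _ ≤ 33 * (d * d * d) * (t ^ 4 * t) * L := by
              refine Nat.mul_le_mul_right _ (Nat.mul_le_mul_right _ ?_)
              have : d * d * 1 ≤ d * d * d := Nat.mul_le_mul_left _ hd1
              omega
          _ = (3 * t) * ((11 * d ^ 3 * t ^ 4) * L) := by ring
          _ ≤ (3 * t) * (n * L) := by
              refine Nat.mul_le_mul_left _ (Nat.mul_le_mul_right _ ?_)
              omega
          _ = n * (3 * t * L) := by ring
      exact Nat.le_of_mul_le_mul_left hmul (by omega)
    calc F2.card ≤ 70 * ((t - 3) * (d * d)) * (n ^ 3 * (n - 4).factorial)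
          + 16 * t ^ 4 * (t - 1) * (d * d) * (n ^ 2 * (n - 4).factorial) := by
          rw [← step2]; exact step1
      _ ≤ 140 * ((t - 3) * (d * d)) * L + 3 * t * L := Nat.add_le_add pcA pcB
  have T3 : F3.card ≤ 2 * (d ^ 3 * t ^ 2) * L := by
    refine le_trans s3 (le_trans (Nat.mul_le_mul_right _ i3) ?_)
    have step : (n * (d * (d * d))) * ((n * n) * (t * t)) * (n - 4).factorial
        = (d ^ 3 * t ^ 2) * (n ^ 3 * (n - 4).factorial) := by ring
    rw [step]
    calc (d ^ 3 * t ^ 2) * (n ^ 3 * (n - 4).factorial)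
        ≤ (d ^ 3 * t ^ 2) * (2 * L) := Nat.mul_le_mul_left _ e4
      _ = 2 * (d ^ 3 * t ^ 2) * L := by ring
  have T4 : F4.card ≤ 2 * (d ^ 3 * t ^ 2) * L := by
    refine le_trans s4 (le_trans (Nat.mul_le_mul_right _ i4) ?_)
    have step : (n * (d * (d * d))) * ((n * n) * (t * t)) * (n - 4).factorial
        = (d ^ 3 * t ^ 2) * (n ^ 3 * (n - 4).factorial) := by ring
    rw [step]
    calc (d ^ 3 * t ^ 2) * (n ^ 3 * (n - 4).factorial)
        ≤ (d ^ 3 * t ^ 2) * (2 * L) := Nat.mul_le_mul_left _ e4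
      _ = 2 * (d ^ 3 * t ^ 2) * L := by ring
  have T5 : F5.card ≤ 2 * (d ^ 3 * t ^ 3) * L := by
    refine le_trans s5 (le_trans (Nat.mul_le_mul_right _ i5) ?_)
    have step : ((n * (d * d)) * (n * d)) * ((n * n) * (t * (t * t))) * (n - 5).factorial
        = (d ^ 3 * t ^ 3) * (n ^ 4 * (n - 5).factorial) := by ring
    rw [step]
    calc (d ^ 3 * t ^ 3) * (n ^ 4 * (n - 5).factorial)
        ≤ (d ^ 3 * t ^ 3) * (2 * L) := Nat.mul_le_mul_left _ e5
      _ = 2 * (d ^ 3 * t ^ 3) * L := by ring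
  have T6 : F6.card ≤ 2 * (d ^ 3 * t ^ 4) * L := by
    refine le_trans s6 (le_trans (Nat.mul_le_mul_right _ i6) ?_)
    have step : ((n * d) * ((n * d) * (n * d))) * ((n * n) * (t * (t * (t * t))))
        * (n - 6).factorial
        = (d ^ 3 * t ^ 4) * (n ^ 5 * (n - 6).factorial) := by ring
    rw [step]
    calc (d ^ 3 * t ^ 4) * (n ^ 5 * (n - 6).factorial)
        ≤ (d ^ 3 * t ^ 4) * (2 * L) := Nat.mul_le_mul_left _ e6
      _ = 2 * (d ^ 3 * t ^ 4) * L := by ring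
  -- combine
  have hcoef : 18 * ((d * d) * (t * t)) + (140 * ((t - 3) * (d * d)) + 3 * t)
      + 2 * (d ^ 3 * t ^ 2) + 2 * (d ^ 3 * t ^ 2) + 2 * (d ^ 3 * t ^ 3) + 2 * (d ^ 3 * t ^ 4)
      ≤ 11 * d ^ 3 * t ^ 4 := by
    have hdd : d * d ≤ d ^ 3 := by
      have : d * d * 1 ≤ d * d * d := Nat.mul_le_mul_left _ hd1
      calc d * d = d * d * 1 := by ring
        _ ≤ d * d * d := this
        _ = d ^ 3 := by ring
    have h3t : 3 * t ≤ 3 * t * d ^ 3 := Nat.le_mul_of_pos_right _ (by omega)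
    have hsum1 : 18 * ((d * d) * (t * t)) + (140 * ((t - 3) * (d * d)) + 3 * t)
        + 2 * (d ^ 3 * t ^ 2) + 2 * (d ^ 3 * t ^ 2) + 2 * (d ^ 3 * t ^ 3) + 2 * (d ^ 3 * t ^ 4)
        ≤ (18 * t ^ 2 + 140 * (t - 3) + 3 * t + 2 * t ^ 2 + 2 * t ^ 2 + 2 * t ^ 3
            + 2 * t ^ 4) * d ^ 3 := by
      have b1 : 18 * ((d * d) * (t * t)) ≤ 18 * t ^ 2 * d ^ 3 := by
        calc 18 * ((d * d) * (t * t)) = 18 * (t * t) * (d * d) := by ring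
          _ ≤ 18 * (t * t) * d ^ 3 := Nat.mul_le_mul_left _ hdd
          _ = 18 * t ^ 2 * d ^ 3 := by ring
      have b2 : 140 * ((t - 3) * (d * d)) ≤ 140 * (t - 3) * d ^ 3 := by
        calc 140 * ((t - 3) * (d * d)) = 140 * (t - 3) * (d * d) := by ring
          _ ≤ 140 * (t - 3) * d ^ 3 := Nat.mul_le_mul_left _ hdd
      have b3 : 3 * t ≤ 3 * t * d ^ 3 := h3t
      have b4 : 2 * (d ^ 3 * t ^ 2) = 2 * t ^ 2 * d ^ 3 := by ring
      have b5 : 2 * (d ^ 3 * t ^ 3) = 2 * t ^ 3 * d ^ 3 := by ring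
      have b6 : 2 * (d ^ 3 * t ^ 4) = 2 * t ^ 4 * d ^ 3 := by ring
      calc 18 * ((d * d) * (t * t)) + (140 * ((t - 3) * (d * d)) + 3 * t)
          + 2 * (d ^ 3 * t ^ 2) + 2 * (d ^ 3 * t ^ 2) + 2 * (d ^ 3 * t ^ 3)
          + 2 * (d ^ 3 * t ^ 4)
          ≤ 18 * t ^ 2 * d ^ 3 + (140 * (t - 3) * d ^ 3 + 3 * t * d ^ 3)
            + 2 * t ^ 2 * d ^ 3 + 2 * t ^ 2 * d ^ 3 + 2 * t ^ 3 * d ^ 3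
            + 2 * t ^ 4 * d ^ 3 := by
            rw [b4, b5, b6]
            exact Nat.add_le_add (Nat.add_le_add (Nat.add_le_add (Nat.add_le_add
              (Nat.add_le_add b1 (Nat.add_le_add b2 b3)) le_rfl) le_rfl) le_rfl) le_rfl
        _ = (18 * t ^ 2 + 140 * (t - 3) + 3 * t + 2 * t ^ 2 + 2 * t ^ 2 + 2 * t ^ 3
            + 2 * t ^ 4) * d ^ 3 := by ring
    refine le_trans hsum1 ?_
    have hts : 18 * t ^ 2 + 140 * (t - 3) + 3 * t + 2 * t ^ 2 + 2 * t ^ 2 + 2 * t ^ 3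
        + 2 * t ^ 4 ≤ 11 * t ^ 4 := by
      obtain ⟨u, rfl⟩ : ∃ u, t = u + 3 := ⟨t - 3, by omega⟩
      have hu : u + 3 - 3 = u := by omega
      rw [hu]
      have A4 : 2 * u ^ 4 ≤ 11 * u ^ 4 := Nat.mul_le_mul_right _ (by norm_num)
      have A3 : 26 * u ^ 3 ≤ 132 * u ^ 3 := Nat.mul_le_mul_right _ (by norm_num)
      have A2 : 148 * u ^ 2 ≤ 594 * u ^ 2 := Nat.mul_le_mul_right _ (by norm_num)
      have A1 : 545 * u ≤ 1188 * u := Nat.mul_le_mul_right _ (by norm_num)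
      calc 18 * (u + 3) ^ 2 + 140 * u + 3 * (u + 3) + 2 * (u + 3) ^ 2 + 2 * (u + 3) ^ 2
          + 2 * (u + 3) ^ 3 + 2 * (u + 3) ^ 4
          = 2 * u ^ 4 + 26 * u ^ 3 + 148 * u ^ 2 + 545 * u + 423 := by ring
        _ ≤ 11 * u ^ 4 + 132 * u ^ 3 + 594 * u ^ 2 + 1188 * u + 891 := by
            exact Nat.add_le_add (Nat.add_le_add (Nat.add_le_add (Nat.add_le_add A4 A3) A2) A1)
              (by norm_num)
        _ = 11 * (u + 3) ^ 4 := by ring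
    calc (18 * t ^ 2 + 140 * (t - 3) + 3 * t + 2 * t ^ 2 + 2 * t ^ 2 + 2 * t ^ 3
        + 2 * t ^ 4) * d ^ 3 ≤ (11 * t ^ 4) * d ^ 3 := Nat.mul_le_mul_right _ hts
      _ = 11 * d ^ 3 * t ^ 4 := by ring
  calc (Finset.univ.filter fun π : Equiv.Perm (Fin n) => Atypical t D H π).card
      ≤ F1.card + (F2.card + (F3.card + (F4.card + (F5.card + F6.card)))) := hsum
    _ ≤ 18 * ((d * d) * (t * t)) * L + ((140 * ((t - 3) * (d * d)) * L + 3 * t * L)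
        + (2 * (d ^ 3 * t ^ 2) * L + (2 * (d ^ 3 * t ^ 2) * L + (2 * (d ^ 3 * t ^ 3) * L
        + 2 * (d ^ 3 * t ^ 4) * L)))) := by
        refine Nat.add_le_add T1 (Nat.add_le_add T2 (Nat.add_le_add T3
          (Nat.add_le_add T4 (Nat.add_le_add T5 T6))))
    _ = (18 * ((d * d) * (t * t)) + (140 * ((t - 3) * (d * d)) + 3 * t)
        + 2 * (d ^ 3 * t ^ 2) + 2 * (d ^ 3 * t ^ 2) + 2 * (d ^ 3 * t ^ 3)
        + 2 * (d ^ 3 * t ^ 4)) * L := by ring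
    _ ≤ (11 * d ^ 3 * t ^ 4) * L := Nat.mul_le_mul_right _ hcoef
    _ = 11 * d ^ 3 * t ^ 4 * (n - 1).factorial := by rw [hL]
end

section
/- Let ε > 0, let k be a positive integer, and set γ = ε/(k²+1). If H is an (ε,k)-consistent orientation on n vertices, then f(H) ≤ k²n and c(H) + (3−γ)f(H) − i(H) − g(H) ≥ γn. -/
open scoped Classical

/-- An *orientation* (`Orient`): a finite simple digraph on `Fin n` with no loops and
no directed cycles of length 2. -/
structure Orient (n : ℕ) where
  E : Fin n → Fin n → Prop
  asymm : ∀ u v, E u v → ¬ E v u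

namespace Orient

variable {n : ℕ}

/-- Out-degree `d⁺(v)`. -/
noncomputable def outDeg (H : Orient n) (v : Fin n) : ℕ :=
  (Finset.univ.filter fun u => H.E v u).card

/-- In-degree `d⁻(v)`. -/
noncomputable def inDeg (H : Orient n) (v : Fin n) : ℕ :=
  (Finset.univ.filter fun u => H.E u v).card

/-- Number of (directed) edges `e(H)`. -/
noncomputable def edgeCount (H : Orient n) : ℕ :=
  (Finset.univ.filter fun p : Fin n × Fin n => H.E p.1 p.2).card

/-- `Δ(H) ≤ k`: maximum degree of the underlying graph is at most `k`. -/
def maxDegLE (H : Orient n) (k : ℕ) : Prop :=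
  ∀ v, H.outDeg v + H.inDeg v ≤ k

/-- `plus(H) = ∑ v, d⁺(v)·d⁻(v)`. -/
noncomputable def plus (H : Orient n) : ℕ :=
  ∑ v, H.outDeg v * H.inDeg v

/-- `minus(H) = ∑ v, (C(d⁺(v),2) + C(d⁻(v),2))`. -/
noncomputable def minus (H : Orient n) : ℕ :=
  ∑ v, (Nat.choose (H.outDeg v) 2 + Nat.choose (H.inDeg v) 2)

/-- `(ε,k)`-consistent orientation. -/
def IsConsistent (ε : ℝ) (k : ℕ) (H : Orient n) : Prop :=
  H.maxDegLE k ∧ (H.plus : ℝ) - (H.minus : ℝ) ≥ ε * n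

/-- A tournament: exactly one directed edge between any two distinct vertices. -/
def IsTournament (G : Orient n) : Prop :=
  ∀ u v : Fin n, u ≠ v → G.E u v ∨ G.E v u

/-- A regular tournament: every out-degree and in-degree equals `(n-1)/2`. -/
def IsRegularTournament (G : Orient n) : Prop :=
  G.IsTournament ∧ ∀ v, G.outDeg v = (n - 1) / 2 ∧ G.inDeg v = (n - 1) / 2

/-- The number `G(H)` of labeled copies of `H` in `G`. -/
noncomputable def copies (H G : Orient n) : ℕ :=
  Nat.card {π : Equiv.Perm (Fin n) // ∀ u v, H.E u v → G.E (π u) (π v)}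

/-- The underlying undirected graph `Ĥ`. -/
def underlying (H : Orient n) : SimpleGraph (Fin n) where
  Adj u v := H.E u v ∨ H.E v u
  symm := ⟨fun u v h => h.symm⟩
  loopless := ⟨fun v h => h.elim (fun h' => H.asymm v v h' h') (fun h' => H.asymm v v h' h')⟩

end Orient

namespace Orient

variable {n : ℕ}

/-- `c(H)`: the number of induced consistent pairs of edges, counted as
directed paths `x → y → z` whose endpoints `x, z` are non-adjacent. -/
noncomputable def cCount (H : Orient n) : ℕ :=
  (Finset.univ.filter fun p : Fin n × Fin n × Fin n =>
    H.E p.1 p.2.1 ∧ H.E p.2.1 p.2.2 ∧ ¬ (H.E p.1 p.2.2 ∨ H.E p.2.2 p.1)).card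

/-- `i(H)`: the number of induced inconsistent pairs of edges; each such pair
`{x→y, z→y}` or `{y→x, y→z}` (with `x, z` non-adjacent) is counted once via `x < z`. -/
noncomputable def iCount (H : Orient n) : ℕ :=
  (Finset.univ.filter fun p : Fin n × Fin n × Fin n =>
    p.1 < p.2.2 ∧
    ((H.E p.1 p.2.1 ∧ H.E p.2.2 p.2.1) ∨ (H.E p.2.1 p.1 ∧ H.E p.2.1 p.2.2)) ∧
    ¬ (H.E p.1 p.2.2 ∨ H.E p.2.2 p.1)).card

/-- `f(H)`: the number of directed triangles `C₃`, each counted once via the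
rotation starting at its smallest vertex. -/
noncomputable def fCount (H : Orient n) : ℕ :=
  (Finset.univ.filter fun p : Fin n × Fin n × Fin n =>
    p.1 < p.2.1 ∧ p.1 < p.2.2 ∧ H.E p.1 p.2.1 ∧ H.E p.2.1 p.2.2 ∧ H.E p.2.2 p.1).card

/-- `g(H)`: the number of transitive triangles `T₃`, each counted once via its
(source, middle, sink) labeling. -/
noncomputable def gCount (H : Orient n) : ℕ :=
  (Finset.univ.filter fun p : Fin n × Fin n × Fin n =>
    H.E p.1 p.2.1 ∧ H.E p.2.1 p.2.2 ∧ H.E p.1 p.2.2).card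

end Orient

namespace Orient
variable {n : ℕ}

lemma ne_of_E (H : Orient n) {a b : Fin n} (h : H.E a b) : a ≠ b := by
  intro e; subst e; exact H.asymm a a h h

lemma card_ltPairs (S : Finset (Fin n)) :
    ((S ×ˢ S).filter fun p => p.1 < p.2).card = S.card.choose 2 := by
  have hswap : ((S ×ˢ S).filter fun p => p.1 < p.2).card
      = ((S ×ˢ S).filter fun p => p.2 < p.1).card := by
    apply Finset.card_nbij' Prod.swap Prod.swap <;>
      simp +contextual [Set.MapsTo, Set.LeftInvOn, Set.RightInvOn, Finset.mem_coe, Finset.mem_filter, Finset.mem_product, and_comm]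
  have hunion : ((S ×ˢ S).filter fun p => p.1 < p.2) ∪ ((S ×ˢ S).filter fun p => p.2 < p.1)
      = S.offDiag := by
    ext p
    simp only [Finset.mem_union, Finset.mem_filter, Finset.mem_product, Finset.mem_offDiag]
    constructor
    · rintro (⟨⟨h1, h2⟩, h⟩ | ⟨⟨h1, h2⟩, h⟩) <;> exact ⟨h1, h2, by omega⟩
    · rintro ⟨h1, h2, h⟩
      rcases lt_or_gt_of_ne h with hlt | hgt
      · exact Or.inl ⟨⟨h1, h2⟩, hlt⟩
      · exact Or.inr ⟨⟨h1, h2⟩, hgt⟩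
  have hdisj : Disjoint ((S ×ˢ S).filter fun p => p.1 < p.2)
      ((S ×ˢ S).filter fun p => p.2 < p.1) := by
    rw [Finset.disjoint_left]
    intro p hp hq
    simp only [Finset.mem_filter] at hp hq
    exact absurd hq.2 (not_lt.mpr (le_of_lt hp.2))
  have hco := Finset.card_union_of_disjoint hdisj
  rw [hunion, Finset.offDiag_card, ← hswap] at hco
  have hms : S.card * S.card - S.card = S.card * (S.card - 1) := by
    rcases S.card with _ | m
    · simp
    · simp [Nat.succ_sub_one, Nat.mul_comm, Nat.succ_mul, Nat.mul_succ]
  rw [hms] at hco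
  rw [Nat.choose_two_right]
  omega

lemma card_filter_triple (P : Fin n → Fin n → Fin n → Prop) :
    (Finset.univ.filter fun p : Fin n × Fin n × Fin n => P p.1 p.2.1 p.2.2).card
      = ∑ v : Fin n, (Finset.univ.filter fun q : Fin n × Fin n => P q.1 v q.2).card := by
  rw [Finset.card_eq_sum_card_fiberwise (f := fun p => p.2.1) (t := Finset.univ)
    (fun _ _ => Finset.mem_univ _)]
  refine Finset.sum_congr rfl fun v _ => ?_
  apply Finset.card_nbij' (fun p => (p.1, p.2.2)) (fun q => (q.1, v, q.2))
  · rintro ⟨x, w, z⟩ hp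
    simp only [Finset.mem_coe, Finset.mem_filter, Finset.mem_univ, true_and] at hp ⊢
    obtain ⟨h1, h2⟩ := hp
    subst h2; exact h1
  · rintro ⟨x, z⟩ hq
    simp only [Finset.mem_coe, Finset.mem_filter, Finset.mem_univ, true_and] at hq ⊢
    exact ⟨hq, trivial⟩
  · rintro ⟨x, w, z⟩ hp
    simp only [Finset.mem_coe, Finset.mem_filter, Finset.mem_univ, true_and] at hp
    simp [hp.2]
  · rintro ⟨x, z⟩ _; rfl

lemma card_path (H : Orient n) :
    (Finset.univ.filter fun p : Fin n × Fin n × Fin n =>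
      H.E p.1 p.2.1 ∧ H.E p.2.1 p.2.2).card = H.plus := by
  rw [plus]
  refine Eq.trans (congrArg Finset.card ?_)
    ((card_filter_triple fun x v z => H.E x v ∧ H.E v z).trans ?_)
  · ext p; simp [Finset.mem_filter]
  refine Finset.sum_congr rfl fun v _ => ?_
  refine (congrArg Finset.card (?_ :
    _ = (Finset.univ.filter fun x => H.E x v) ×ˢ (Finset.univ.filter fun z => H.E v z))).trans ?_
  · ext q; simp [Finset.mem_product]
  · rw [Finset.card_product, outDeg, inDeg, Nat.mul_comm]

lemma card_incons (H : Orient n) :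
    (Finset.univ.filter fun p : Fin n × Fin n × Fin n =>
      p.1 < p.2.2 ∧ ((H.E p.1 p.2.1 ∧ H.E p.2.2 p.2.1) ∨ (H.E p.2.1 p.1 ∧ H.E p.2.1 p.2.2))).card
      = H.minus := by
  rw [minus]
  refine Eq.trans (congrArg Finset.card ?_)
    ((card_filter_triple fun x v z =>
      x < z ∧ ((H.E x v ∧ H.E z v) ∨ (H.E v x ∧ H.E v z))).trans ?_)
  · ext p; simp [Finset.mem_filter]
  refine Finset.sum_congr rfl fun v _ => ?_
  have hdisj : Disjoint
      (((Finset.univ.filter fun x => H.E x v) ×ˢ (Finset.univ.filter fun x => H.E x v)).filter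
        fun q : Fin n × Fin n => q.1 < q.2)
      (((Finset.univ.filter fun x => H.E v x) ×ˢ (Finset.univ.filter fun x => H.E v x)).filter
        fun q : Fin n × Fin n => q.1 < q.2) := by
    rw [Finset.disjoint_left]
    intro q hq hq'
    simp only [Finset.mem_filter, Finset.mem_product, Finset.mem_univ, true_and] at hq hq'
    exact H.asymm _ _ hq.1.1 hq'.1.1
  refine (congrArg Finset.card (?_ :
    _ = (((Finset.univ.filter fun x => H.E x v) ×ˢ (Finset.univ.filter fun x => H.E x v)).filter
        fun q : Fin n × Fin n => q.1 < q.2)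
      ∪ (((Finset.univ.filter fun x => H.E v x) ×ˢ (Finset.univ.filter fun x => H.E v x)).filter
        fun q : Fin n × Fin n => q.1 < q.2))).trans ?_
  · ext q
    simp only [Finset.mem_union, Finset.mem_filter, Finset.mem_product, Finset.mem_univ, true_and]
    tauto
  · rw [Finset.card_union_of_disjoint hdisj, card_ltPairs, card_ltPairs, outDeg, inDeg,
      Nat.add_comm]

end Orient
namespace Orient
variable {n : ℕ}

lemma card_cyc (H : Orient n) :
    (Finset.univ.filter fun p : Fin n × Fin n × Fin n =>
      H.E p.1 p.2.1 ∧ H.E p.2.1 p.2.2 ∧ H.E p.2.2 p.1).card = 3 * H.fCount := by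
  set T := Finset.univ.filter fun p : Fin n × Fin n × Fin n =>
      H.E p.1 p.2.1 ∧ H.E p.2.1 p.2.2 ∧ H.E p.2.2 p.1 with hT
  set T1 := T.filter fun p => p.1 < p.2.1 ∧ p.1 < p.2.2 with hT1
  set T2 := T.filter fun p => p.2.1 < p.1 ∧ p.2.1 < p.2.2 with hT2
  set T3 := T.filter fun p => p.2.2 < p.1 ∧ p.2.2 < p.2.1 with hT3
  have hcover : T = T1 ∪ T2 ∪ T3 := by
    ext ⟨x, v, z⟩
    simp only [hT1, hT2, hT3, Finset.mem_union, Finset.mem_filter]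
    constructor
    · intro h
      obtain ⟨-, h1, h2, h3⟩ := Finset.mem_filter.mp h
      have d1 : (x : ℕ) ≠ (v : ℕ) := by simpa [Fin.ext_iff] using H.ne_of_E h1
      have d2 : (v : ℕ) ≠ (z : ℕ) := by simpa [Fin.ext_iff] using H.ne_of_E h2
      have d3 : (z : ℕ) ≠ (x : ℕ) := by simpa [Fin.ext_iff] using H.ne_of_E h3
      have tri : ((x : ℕ) < v ∧ (x : ℕ) < z) ∨ ((v : ℕ) < x ∧ (v : ℕ) < z)
          ∨ ((z : ℕ) < x ∧ (z : ℕ) < v) := by omega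
      simp only [Fin.lt_def]
      rcases tri with t | t | t
      · exact Or.inl (Or.inl ⟨h, t⟩)
      · exact Or.inl (Or.inr ⟨h, t⟩)
      · exact Or.inr ⟨h, t⟩
    · rintro ((⟨h, -⟩ | ⟨h, -⟩) | ⟨h, -⟩) <;> exact h
  have hd12 : Disjoint T1 T2 := by
    rw [Finset.disjoint_left]
    intro p h1 h2
    simp only [hT1, hT2, Finset.mem_filter] at h1 h2
    exact absurd h2.2.1 (not_lt.mpr h1.2.1.le)
  have hd3 : Disjoint (T1 ∪ T2) T3 := by
    rw [Finset.disjoint_left]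
    intro p h1 h3
    simp only [hT1, hT2, hT3, Finset.mem_union, Finset.mem_filter] at h1 h3
    rcases h1 with h1 | h2
    · exact absurd h3.2.1 (not_lt.mpr h1.2.2.le)
    · exact absurd h3.2.2 (not_lt.mpr h2.2.2.le)
  have hc1 : T1.card = H.fCount := by
    rw [fCount]
    refine congrArg Finset.card ?_
    ext p
    simp only [hT1, hT, Finset.mem_filter, Finset.mem_univ, true_and]
    tauto
  have hc2 : T2.card = H.fCount := by
    rw [fCount]
    apply Finset.card_nbij' (fun p => (p.2.1, p.2.2, p.1)) (fun q => (q.2.2, q.1, q.2.1))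
    · rintro ⟨x, v, z⟩ hp
      simp only [Finset.mem_coe, hT2, hT, Finset.mem_filter, Finset.mem_univ, true_and] at hp ⊢
      tauto
    · rintro ⟨a, b, c⟩ hq
      simp only [Finset.mem_coe, hT2, hT, Finset.mem_filter, Finset.mem_univ, true_and] at hq ⊢
      tauto
    · rintro ⟨x, v, z⟩ _; rfl
    · rintro ⟨a, b, c⟩ _; rfl
  have hc3 : T3.card = H.fCount := by
    rw [fCount]
    apply Finset.card_nbij' (fun p => (p.2.2, p.1, p.2.1)) (fun q => (q.2.1, q.2.2, q.1))
    · rintro ⟨x, v, z⟩ hp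
      simp only [Finset.mem_coe, hT3, hT, Finset.mem_filter, Finset.mem_univ, true_and] at hp ⊢
      tauto
    · rintro ⟨a, b, c⟩ hq
      simp only [Finset.mem_coe, hT3, hT, Finset.mem_filter, Finset.mem_univ, true_and] at hq ⊢
      tauto
    · rintro ⟨x, v, z⟩ _; rfl
    · rintro ⟨a, b, c⟩ _; rfl
  rw [hcover, Finset.card_union_of_disjoint hd3, Finset.card_union_of_disjoint hd12,
    hc1, hc2, hc3]
  ring

end Orient
namespace Orient
variable {n : ℕ}

lemma card_inAdj (H : Orient n) :
    (Finset.univ.filter fun p : Fin n × Fin n × Fin n =>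
      p.1 < p.2.2 ∧ H.E p.1 p.2.1 ∧ H.E p.2.2 p.2.1 ∧ (H.E p.1 p.2.2 ∨ H.E p.2.2 p.1)).card
      = H.gCount := by
  rw [gCount]
  apply Finset.card_nbij'
    (fun p => if H.E p.1 p.2.2 then (p.1, p.2.2, p.2.1) else (p.2.2, p.1, p.2.1))
    (fun q => if q.1 < q.2.1 then (q.1, q.2.2, q.2.1) else (q.2.1, q.2.2, q.1))
  · rintro ⟨x, v, z⟩ hp
    simp only [Finset.mem_coe, Finset.mem_filter, Finset.mem_univ, true_and] at hp ⊢
    obtain ⟨hlt, h1, h2, hadj⟩ := hp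
    by_cases hxz : H.E x z
    · simp only [if_pos hxz]
      exact ⟨hxz, h2, h1⟩
    · have hzx : H.E z x := by tauto
      simp only [if_neg hxz]
      exact ⟨hzx, h1, h2⟩
  · rintro ⟨a, b, c⟩ hq
    simp only [Finset.mem_coe, Finset.mem_filter, Finset.mem_univ, true_and] at hq ⊢
    obtain ⟨h1, h2, h3⟩ := hq
    by_cases hab : a < b
    · simp only [if_pos hab]
      exact ⟨hab, h3, h2, Or.inl h1⟩
    · have hba : b < a := lt_of_le_of_ne (not_lt.mp hab) (Ne.symm (H.ne_of_E h1))
      simp only [if_neg hab]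
      exact ⟨hba, h2, h3, Or.inr h1⟩
  · rintro ⟨x, v, z⟩ hp
    simp only [Finset.mem_coe, Finset.mem_filter, Finset.mem_univ, true_and] at hp
    obtain ⟨hlt, h1, h2, hadj⟩ := hp
    by_cases hxz : H.E x z
    · simp [if_pos hxz, if_pos hlt]
    · simp [if_neg hxz, if_neg (not_lt.mpr (le_of_lt hlt))]
  · rintro ⟨a, b, c⟩ hq
    simp only [Finset.mem_coe, Finset.mem_filter, Finset.mem_univ, true_and] at hq
    obtain ⟨h1, h2, h3⟩ := hq
    by_cases hab : a < b
    · simp [if_pos hab, if_pos h1]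
    · simp [if_neg hab, if_neg (H.asymm a b h1)]

lemma card_outAdj (H : Orient n) :
    (Finset.univ.filter fun p : Fin n × Fin n × Fin n =>
      p.1 < p.2.2 ∧ H.E p.2.1 p.1 ∧ H.E p.2.1 p.2.2 ∧ (H.E p.1 p.2.2 ∨ H.E p.2.2 p.1)).card
      = H.gCount := by
  rw [gCount]
  apply Finset.card_nbij'
    (fun p => if H.E p.1 p.2.2 then (p.2.1, p.1, p.2.2) else (p.2.1, p.2.2, p.1))
    (fun q => if q.2.1 < q.2.2 then (q.2.1, q.1, q.2.2) else (q.2.2, q.1, q.2.1))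
  · rintro ⟨x, v, z⟩ hp
    simp only [Finset.mem_coe, Finset.mem_filter, Finset.mem_univ, true_and] at hp ⊢
    obtain ⟨hlt, h1, h2, hadj⟩ := hp
    by_cases hxz : H.E x z
    · simp only [if_pos hxz]
      exact ⟨h1, hxz, h2⟩
    · have hzx : H.E z x := by tauto
      simp only [if_neg hxz]
      exact ⟨h2, hzx, h1⟩
  · rintro ⟨a, b, c⟩ hq
    simp only [Finset.mem_coe, Finset.mem_filter, Finset.mem_univ, true_and] at hq ⊢
    obtain ⟨h1, h2, h3⟩ := hq
    by_cases hbc : b < c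
    · simp only [if_pos hbc]
      exact ⟨hbc, h1, h3, Or.inl h2⟩
    · have hcb : c < b := lt_of_le_of_ne (not_lt.mp hbc) (Ne.symm (H.ne_of_E h2))
      simp only [if_neg hbc]
      exact ⟨hcb, h3, h1, Or.inr h2⟩
  · rintro ⟨x, v, z⟩ hp
    simp only [Finset.mem_coe, Finset.mem_filter, Finset.mem_univ, true_and] at hp
    obtain ⟨hlt, h1, h2, hadj⟩ := hp
    by_cases hxz : H.E x z
    · simp [if_pos hxz, if_pos hlt]
    · simp [if_neg hxz, if_neg (not_lt.mpr (le_of_lt hlt))]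
  · rintro ⟨a, b, c⟩ hq
    simp only [Finset.mem_coe, Finset.mem_filter, Finset.mem_univ, true_and] at hq
    obtain ⟨h1, h2, h3⟩ := hq
    by_cases hbc : b < c
    · simp [if_pos hbc, if_pos h2]
    · simp [if_neg hbc, if_neg (H.asymm b c h2)]

end Orient
namespace Orient
variable {n : ℕ}

lemma plus_decomp (H : Orient n) :
    H.plus = H.cCount + H.gCount + 3 * H.fCount := by
  rw [← card_path]
  set P := Finset.univ.filter fun p : Fin n × Fin n × Fin n =>
      H.E p.1 p.2.1 ∧ H.E p.2.1 p.2.2 with hP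
  have h1 := Finset.card_filter_add_card_filter_not
    (s := P) (p := fun p => H.E p.1 p.2.2)
  have h2 := Finset.card_filter_add_card_filter_not
    (s := P.filter fun p => ¬ H.E p.1 p.2.2) (p := fun p => H.E p.2.2 p.1)
  have hg : (P.filter fun p => H.E p.1 p.2.2).card = H.gCount := by
    rw [gCount]
    refine congrArg Finset.card ?_
    ext p
    simp only [hP, Finset.mem_filter, Finset.mem_univ, true_and]
    tauto
  have hf : ((P.filter fun p => ¬ H.E p.1 p.2.2).filter fun p => H.E p.2.2 p.1).card
      = 3 * H.fCount := by
    rw [← card_cyc]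
    refine congrArg Finset.card ?_
    ext p
    simp only [hP, Finset.mem_filter, Finset.mem_univ, true_and]
    constructor
    · rintro ⟨⟨⟨e1, e2⟩, -⟩, e3⟩
      exact ⟨e1, e2, e3⟩
    · rintro ⟨e1, e2, e3⟩
      exact ⟨⟨⟨e1, e2⟩, H.asymm _ _ e3⟩, e3⟩
  have hc : ((P.filter fun p => ¬ H.E p.1 p.2.2).filter fun p => ¬ H.E p.2.2 p.1).card
      = H.cCount := by
    rw [cCount]
    refine congrArg Finset.card ?_
    ext p
    simp only [hP, Finset.mem_filter, Finset.mem_univ, true_and]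
    tauto
  omega

lemma minus_decomp (H : Orient n) :
    H.minus = H.iCount + 2 * H.gCount := by
  rw [← card_incons]
  set Q := Finset.univ.filter fun p : Fin n × Fin n × Fin n =>
      p.1 < p.2.2 ∧ ((H.E p.1 p.2.1 ∧ H.E p.2.2 p.2.1) ∨ (H.E p.2.1 p.1 ∧ H.E p.2.1 p.2.2))
    with hQ
  have h1 := Finset.card_filter_add_card_filter_not
    (s := Q) (p := fun p => H.E p.1 p.2.2 ∨ H.E p.2.2 p.1)
  have hi : (Q.filter fun p => ¬ (H.E p.1 p.2.2 ∨ H.E p.2.2 p.1)).card = H.iCount := by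
    rw [iCount]
    refine congrArg Finset.card ?_
    ext p
    simp only [hQ, Finset.mem_filter, Finset.mem_univ, true_and]
    tauto
  have hadj : (Q.filter fun p => H.E p.1 p.2.2 ∨ H.E p.2.2 p.1).card = 2 * H.gCount := by
    have hdisj : Disjoint
        (Finset.univ.filter fun p : Fin n × Fin n × Fin n =>
          p.1 < p.2.2 ∧ H.E p.1 p.2.1 ∧ H.E p.2.2 p.2.1 ∧ (H.E p.1 p.2.2 ∨ H.E p.2.2 p.1))
        (Finset.univ.filter fun p : Fin n × Fin n × Fin n =>
          p.1 < p.2.2 ∧ H.E p.2.1 p.1 ∧ H.E p.2.1 p.2.2 ∧ (H.E p.1 p.2.2 ∨ H.E p.2.2 p.1)) := by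
      rw [Finset.disjoint_left]
      intro p hp hq
      simp only [Finset.mem_filter, Finset.mem_univ, true_and] at hp hq
      exact H.asymm _ _ hp.2.1 hq.2.1
    refine (congrArg Finset.card (?_ :
        _ = (Finset.univ.filter fun p : Fin n × Fin n × Fin n =>
          p.1 < p.2.2 ∧ H.E p.1 p.2.1 ∧ H.E p.2.2 p.2.1 ∧ (H.E p.1 p.2.2 ∨ H.E p.2.2 p.1))
        ∪ (Finset.univ.filter fun p : Fin n × Fin n × Fin n =>
          p.1 < p.2.2 ∧ H.E p.2.1 p.1 ∧ H.E p.2.1 p.2.2 ∧ (H.E p.1 p.2.2 ∨ H.E p.2.2 p.1)))).trans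
      ?_
    · ext p
      simp only [hQ, Finset.mem_union, Finset.mem_filter, Finset.mem_univ, true_and]
      tauto
    · rw [Finset.card_union_of_disjoint hdisj, card_inAdj, card_outAdj]
      omega
  omega

lemma fCount_le_plus (H : Orient n) : H.fCount ≤ H.plus := by
  rw [← card_path, fCount]
  apply Finset.card_le_card
  intro p hp
  simp only [Finset.mem_filter, Finset.mem_univ, true_and] at hp ⊢
  tauto

lemma plus_le (H : Orient n) {k : ℕ} (hdeg : H.maxDegLE k) : H.plus ≤ k ^ 2 * n := by
  rw [plus]
  calc ∑ v, H.outDeg v * H.inDeg v ≤ ∑ _v : Fin n, k * k := by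
        refine Finset.sum_le_sum fun v _ => Nat.mul_le_mul ?_ ?_
        · exact le_trans (Nat.le_add_right _ _) (hdeg v)
        · exact le_trans (Nat.le_add_left _ _) (hdeg v)
    _ = k ^ 2 * n := by
        simp [Finset.sum_const, Finset.card_fin, mul_comm, pow_two]

end Orient

/-- Lemma 3.2, computation: let `γ = ε/(k²+1)`. Every
`(ε,k)`-consistent orientation `H` on `n` vertices has `f(H) ≤ k²n` and
`c(H) + (3-γ)f(H) - i(H) - g(H) ≥ γn`. -/
theorem consistent_orientation_triangle_bound
    (ε : ℝ) (hε : 0 < ε) (k : ℕ) (hk : 1 ≤ k) (n : ℕ) (H : Orient n)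
    (hH : H.IsConsistent ε k) :
    H.fCount ≤ k ^ 2 * n ∧
    (H.cCount : ℝ) + (3 - ε / ((k : ℝ) ^ 2 + 1)) * (H.fCount : ℝ)
        - (H.iCount : ℝ) - (H.gCount : ℝ) ≥ (ε / ((k : ℝ) ^ 2 + 1)) * n := by
  obtain ⟨hdeg, hcons⟩ := hH
  have hfk : H.fCount ≤ k ^ 2 * n := le_trans H.fCount_le_plus (H.plus_le hdeg)
  refine ⟨hfk, ?_⟩
  have hcons' : (H.cCount : ℝ) + 3 * H.fCount - H.iCount - H.gCount ≥ ε * n := by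
    rw [H.plus_decomp, H.minus_decomp] at hcons
    push_cast at hcons
    linarith
  set γ : ℝ := ε / ((k : ℝ) ^ 2 + 1) with hγ
  have hpos : (0 : ℝ) < (k : ℝ) ^ 2 + 1 := by positivity
  have hγnn : 0 ≤ γ := by positivity
  have hfr : (H.fCount : ℝ) ≤ (k : ℝ) ^ 2 * n := by exact_mod_cast hfk
  have e1 : γ * ((k : ℝ) ^ 2 + 1) = ε := by
    rw [hγ]; field_simp
  have e2 : γ * ((k : ℝ) ^ 2 + 1) * (n : ℝ) = ε * n := by rw [e1]
  have e3 : γ * (H.fCount : ℝ) ≤ γ * ((k : ℝ) ^ 2 * n) :=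
    mul_le_mul_of_nonneg_left hfr hγnn
  nlinarith [hcons', e2, e3]
end

section
/- Let t ≥ 3 be odd and let n be odd and sufficiently large as a function of t. Let D be an adjusted t-decomposition of K_n, let H be a graph on n vertices, and let e and f be two edges of H sharing a common vertex. For a uniformly random bijection π from V(H) to the vertex set of K_n, let p be the probability that the images π(e) and π(f) lie in (the edge set of) the same member of D. Then |p − (t−2)/(n−2)| ≤ 3t²/n². -/
open scoped Classical

/-! ### Auxiliary counting machinery -/

/-- Ordered pairs `(x, y)` with `s(x,y)` an edge of `P`. -/
noncomputable def opairs {n : ℕ} (P : Finset (Sym2 (Fin n))) : Finset (Fin n × Fin n) :=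
  Finset.univ.filter fun p => s(p.1, p.2) ∈ P

/-- Ordered triples `(x, y, z)` with `y ≠ z` and `s(x,y), s(x,z)` both edges of `P`. -/
noncomputable def trips {n : ℕ} (P : Finset (Sym2 (Fin n))) : Finset (Fin n × Fin n × Fin n) :=
  Finset.univ.filter fun p => p.2.1 ≠ p.2.2 ∧ s(p.1, p.2.1) ∈ P ∧ s(p.1, p.2.2) ∈ P

lemma mem_opairs {n : ℕ} {P : Finset (Sym2 (Fin n))} {x y : Fin n} :
    (x, y) ∈ opairs P ↔ s(x, y) ∈ P := by simp [opairs]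

lemma mem_trips {n : ℕ} {P : Finset (Sym2 (Fin n))} {x y z : Fin n} :
    (x, y, z) ∈ trips P ↔ y ≠ z ∧ s(x, y) ∈ P ∧ s(x, z) ∈ P := by simp [trips]

lemma opairs_cliqueEdges {n : ℕ} (s : Finset (Fin n)) :
    opairs (cliqueEdges s) = s.offDiag := by
  ext ⟨x, y⟩
  simp [opairs, cliqueEdges, Finset.mem_offDiag, Sym2.mk_isDiag_iff]
  tauto

lemma trips_card_le {n : ℕ} (P : Finset (Sym2 (Fin n))) :
    (trips P).card ≤ (opairs P).card * (opairs P).card := by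
  rw [← Finset.card_product]
  apply Finset.card_le_card_of_injOn (fun p => ((p.1, p.2.1), (p.1, p.2.2)))
  · rintro ⟨x, y, z⟩ h
    rw [Finset.mem_coe, mem_trips] at h
    simp [opairs, Finset.mem_product, h.2.1, h.2.2]
  · rintro ⟨x, y, z⟩ - ⟨x', y', z'⟩ - h
    simp only [Prod.mk.injEq] at h
    simp [h.1.1, h.1.2, h.2.2]

lemma trips_cliqueEdges {n : ℕ} (s : Finset (Fin n)) :
    (trips (cliqueEdges s)).card = s.card * ((s.card - 1) * (s.card - 2)) := by
  have hset : trips (cliqueEdges s) = s.biUnion (fun x => {x} ×ˢ (s.erase x).offDiag) := by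
    ext ⟨x, y, z⟩
    simp only [trips, cliqueEdges, Finset.mem_filter, Finset.mem_univ, true_and,
      Finset.mem_biUnion, Finset.mem_product, Finset.mem_singleton, Finset.mem_offDiag,
      Finset.mem_erase, Sym2.mk_isDiag_iff, Sym2.mem_iff, forall_eq_or_imp, forall_eq]
    constructor
    · rintro ⟨hyz, ⟨hxy, hx, hy⟩, ⟨hxz, _, hz⟩⟩
      exact ⟨x, hx, rfl, ⟨Ne.symm hxy, hy⟩, ⟨Ne.symm hxz, hz⟩, hyz⟩
    · rintro ⟨w, hw, rfl, ⟨hyx, hy⟩, ⟨hzx, hz⟩, hyz⟩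
      exact ⟨hyz, ⟨Ne.symm hyx, hw, hy⟩, ⟨Ne.symm hzx, hw, hz⟩⟩
  rw [hset, Finset.card_biUnion]
  · have h1 : ∀ x ∈ s, ({x} ×ˢ (s.erase x).offDiag).card = (s.card - 1) * (s.card - 2) := by
      intro x hx
      rw [Finset.card_product, Finset.card_singleton, one_mul, Finset.offDiag_card,
        Finset.card_erase_of_mem hx]
      rcases s.card with _ | _ | m
      · simp
      · simp
      · simp only [Nat.add_sub_cancel, Nat.succ_sub_one]
        have h2 : (m+1)*(m+1) = (m+1)*m + (m+1) := by ring
        rw [show m + 1 + 1 - 2 = m from rfl, h2, Nat.add_sub_cancel]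
    rw [Finset.sum_congr rfl h1, Finset.sum_const, smul_eq_mul]
  · intro x hx y hy hxy
    simp only [Finset.disjoint_left]
    rintro ⟨a, bc⟩ h1 h2
    simp only [Finset.mem_product, Finset.mem_singleton] at h1 h2
    exact hxy (h1.1 ▸ h2.1 ▸ rfl)

lemma opairs_c4_le {n : ℕ} {P : Finset (Sym2 (Fin n))} (h : IsC4 P) :
    (opairs P).card ≤ 8 := by
  obtain ⟨a, b, c, d, hnd, rfl⟩ := h
  have hsub : opairs ({s(a, b), s(b, c), s(c, d), s(d, a)} : Finset (Sym2 (Fin n))) ⊆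
      ({(a,b),(b,a),(b,c),(c,b),(c,d),(d,c),(d,a),(a,d)} : Finset (Fin n × Fin n)) := by
    rintro ⟨x, y⟩ hxy
    simp only [opairs, Finset.mem_filter, Finset.mem_univ, true_and, Finset.mem_insert,
      Finset.mem_singleton, Sym2.eq_iff] at hxy
    simp only [Finset.mem_insert, Finset.mem_singleton, Prod.mk.injEq]
    tauto
  apply (Finset.card_le_card hsub).trans
  apply (Finset.card_insert_le _ _).trans (Nat.succ_le_succ _)
  apply (Finset.card_insert_le _ _).trans (Nat.succ_le_succ _)
  apply (Finset.card_insert_le _ _).trans (Nat.succ_le_succ _)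
  apply (Finset.card_insert_le _ _).trans (Nat.succ_le_succ _)
  apply (Finset.card_insert_le _ _).trans (Nat.succ_le_succ _)
  apply (Finset.card_insert_le _ _).trans (Nat.succ_le_succ _)
  apply (Finset.card_insert_le _ _).trans (Nat.succ_le_succ _)
  simp

lemma exists_perm_triple {α : Type*} [DecidableEq α] {v a b x y z : α}
    (hva : v ≠ a) (hvb : v ≠ b) (hab : a ≠ b)
    (hxy : x ≠ y) (hxz : x ≠ z) (hyz : y ≠ z) :
    ∃ σ : Equiv.Perm α, σ v = x ∧ σ a = y ∧ σ b = z := by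
  set σ₁ := Equiv.swap v x with hσ₁
  have h1v : σ₁ v = x := Equiv.swap_apply_left v x
  have h1a : σ₁ a ≠ x := fun h => hva (σ₁.injective (h.trans h1v.symm)).symm
  have h1b : σ₁ b ≠ x := fun h => hvb (σ₁.injective (h.trans h1v.symm)).symm
  set σ₂ := Equiv.swap (σ₁ a) y with hσ₂
  have h2x : σ₂ x = x := Equiv.swap_apply_of_ne_of_ne (Ne.symm h1a) hxy
  have h2a : σ₂ (σ₁ a) = y := Equiv.swap_apply_left _ _
  have h2b1 : σ₂ (σ₁ b) ≠ x := by
    intro h; exact h1b (σ₂.injective (h.trans h2x.symm))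
  have h2b2 : σ₂ (σ₁ b) ≠ y := by
    intro h
    exact hab (σ₁.injective (σ₂.injective (h2a.trans h.symm)))
  set σ₃ := Equiv.swap (σ₂ (σ₁ b)) z with hσ₃
  have h3x : σ₃ x = x := Equiv.swap_apply_of_ne_of_ne (Ne.symm h2b1) hxz
  have h3y : σ₃ y = y := Equiv.swap_apply_of_ne_of_ne (Ne.symm h2b2) hyz
  have h3b : σ₃ (σ₂ (σ₁ b)) = z := Equiv.swap_apply_left _ _
  refine ⟨σ₃ * σ₂ * σ₁, ?_, ?_, ?_⟩
  · simp only [Equiv.Perm.mul_apply, h1v, h2x, h3x]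
  · simp only [Equiv.Perm.mul_apply, h2a, h3y]
  · simp only [Equiv.Perm.mul_apply, h3b]

lemma card_fixing {n : ℕ} {v a b : Fin n} (hva : v ≠ a) (hvb : v ≠ b) (hab : a ≠ b) :
    (Finset.univ.filter fun π : Equiv.Perm (Fin n) => π v = v ∧ π a = a ∧ π b = b).card
      = (n - 3).factorial := by
  rw [Finset.filter_congr_decidable, ← Fintype.card_subtype]
  have e0 : {π : Equiv.Perm (Fin n) // π v = v ∧ π a = a ∧ π b = b} ≃
      {π : Equiv.Perm (Fin n) // ∀ i, ¬ (i ∉ ({v, a, b} : Finset (Fin n))) → π i = i} := by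
    apply Equiv.subtypeEquivRight
    intro π
    constructor
    · rintro ⟨h1, h2, h3⟩ i hi
      simp only [not_not, Finset.mem_insert, Finset.mem_singleton] at hi
      rcases hi with rfl | rfl | rfl <;> assumption
    · intro h
      refine ⟨h v (by simp), h a (by simp), h b (by simp)⟩
  have e1 := (Equiv.Perm.subtypeEquivSubtypePerm
    (fun i => i ∉ ({v, a, b} : Finset (Fin n)))).symm
  rw [Fintype.card_congr (e0.trans e1), Fintype.card_perm]
  congr 1
  rw [Fintype.card_subtype_compl, Fintype.card_fin, Fintype.card_coe]
  congr 1
  rw [Finset.card_insert_of_notMem (by simp [hva, hvb]),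
    Finset.card_insert_of_notMem (by simp [hab]), Finset.card_singleton]

lemma card_fiber {n : ℕ} {v a b x y z : Fin n} (hva : v ≠ a) (hvb : v ≠ b) (hab : a ≠ b)
    (hxy : x ≠ y) (hxz : x ≠ z) (hyz : y ≠ z) :
    (Finset.univ.filter fun π : Equiv.Perm (Fin n) => π v = x ∧ π a = y ∧ π b = z).card
      = (n - 3).factorial := by
  obtain ⟨σ, hσv, hσa, hσb⟩ := exists_perm_triple hva hvb hab hxy hxz hyz
  rw [← card_fixing hva hvb hab]
  apply Finset.card_bij' (fun π _ => σ⁻¹ * π) (fun π _ => σ * π)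
  · intro π hπ
    simp only [Finset.mem_filter, Finset.mem_univ, true_and] at hπ ⊢
    simp only [Equiv.Perm.mul_apply, hπ.1, hπ.2.1, hπ.2.2, ← hσv, ← hσa, ← hσb,
      Equiv.Perm.inv_def, Equiv.symm_apply_apply]
    exact ⟨trivial, trivial, trivial⟩
  · intro π hπ
    simp only [Finset.mem_filter, Finset.mem_univ, true_and] at hπ ⊢
    simp only [Equiv.Perm.mul_apply, hπ.1, hπ.2.1, hπ.2.2, hσv, hσa, hσb]
    exact ⟨trivial, trivial, trivial⟩
  · intro π _; simp [mul_assoc]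
  · intro π _; simp [mul_assoc]

lemma crunch (r Cr b u : ℝ) (hr : 0 ≤ r) (hC : 0 ≤ Cr) (hb : 0 ≤ b)
    (hbc : b * 6 ≤ u * r) (hu : Cr + 9*(3+r)^2 + 10 ≤ u) :
    (b*(42+6*r) + Cr) * u^2 ≤ 3*(3+r)^2 * (u*(u-1)*(u-2)) := by
  have hu0 : (10:ℝ) ≤ u := by nlinarith [sq_nonneg (3+r)]
  have h1 : b*(42+6*r) ≤ u*r*(7+r) := by nlinarith
  have h2 : (27+11*r+2*r^2)*u ≥ 81+54*r+9*r^2 + Cr + 10 := by nlinarith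
  nlinarith [mul_pos (by linarith : (0:ℝ) < u) (by linarith : (0:ℝ) < u),
    mul_nonneg (mul_nonneg (by linarith : (0:ℝ) ≤ u) (by linarith : (0:ℝ) ≤ u)) hr,
    mul_le_mul_of_nonneg_right h2 (mul_nonneg (by linarith : (0:ℝ) ≤ u) (by linarith : (0:ℝ) ≤ u)),
    mul_le_mul_of_nonneg_right h1 (mul_nonneg (by linarith : (0:ℝ) ≤ u) (by linarith : (0:ℝ) ≤ u))]

set_option maxHeartbeats 4000000 in
/-- Claim 3.4: let `t ≥ 3` be odd and `n` odd and sufficiently large,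
let `D` be an adjusted `t`-decomposition of `K_n`, let `H` be a graph on `n` vertices and
let `e, f` be two distinct edges of `H` sharing a vertex. The probability `p` that a
uniformly random bijection of the vertices places the images of `e` and `f` inside the
same member of `D` satisfies `|p - (t-2)/(n-2)| ≤ 3t²/n²`. -/
theorem prob_same_member_close (t : ℕ) (htodd : Odd t) (ht : 3 ≤ t) :
    ∃ N : ℕ, ∀ n : ℕ, Odd n → n > N →
      ∀ D : Finset (Finset (Sym2 (Fin n))), IsAdjustedDecomp t n D →
      ∀ H : SimpleGraph (Fin n), ∀ e ∈ H.edgeSet, ∀ f ∈ H.edgeSet, e ≠ f →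
      (∃ v : Fin n, v ∈ e ∧ v ∈ f) →
      |(Nat.card {π : Equiv.Perm (Fin n) //
            ∃ P ∈ D, Sym2.map π e ∈ P ∧ Sym2.map π f ∈ P} : ℝ) / (n.factorial : ℝ)
          - ((t : ℝ) - 2) / ((n : ℝ) - 2)|
        ≤ 3 * (t : ℝ) ^ 2 / (n : ℝ) ^ 2 := by
  obtain ⟨t', rfl⟩ : ∃ t', t = 3 + t' := ⟨t - 3, by omega⟩
  set q : ℕ := (5 + 2*t') * (4 + 2*t') with hq
  set C : ℕ := t' * (72 + 8 * t') + (2 + t') * (q*q + (1+t')*q) with hC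
  refine ⟨C + 9 * (3+t')^2 + 9, ?_⟩
  intro n hnodd hn D hD H e he f hf hef hshare
  obtain ⟨⟨hNon, hCov⟩, hClass, hDeg, hB3c, hB4c, hB5c⟩ := hD
  obtain ⟨v, hve, hvf⟩ := hshare
  obtain ⟨a, rfl⟩ := (Sym2.mem_iff_exists).mp hve
  obtain ⟨b, rfl⟩ := (Sym2.mem_iff_exists).mp hvf
  have hva : v ≠ a := (H.mem_edgeSet.mp he).ne
  have hvb : v ≠ b := (H.mem_edgeSet.mp hf).ne
  have hab : a ≠ b := fun h => hef (by rw [h])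
  obtain ⟨m, rfl⟩ : ∃ m, n = m + 3 := ⟨n - 3, by omega⟩
  have hnd : ∀ P ∈ D, ∀ e ∈ P, ¬ e.IsDiag := fun P hP => (hNon P hP).2
  have huniq : ∀ P ∈ D, ∀ Q ∈ D, ∀ e, e ∈ P → e ∈ Q → P = Q := by
    intro P hP Q hQ e heP heQ
    obtain ⟨R, hR, hRu⟩ := hCov e (hnd P hP e heP)
    rw [hRu P ⟨hP, heP⟩, hRu Q ⟨hQ, heQ⟩]
  -- Step 1 : count permutations fiberwise over triples
  have hdisjt : ∀ P ∈ D, ∀ Q ∈ D, P ≠ Q → Disjoint (trips P) (trips Q) := by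
    intro P hP Q hQ hne
    rw [Finset.disjoint_left]
    rintro ⟨x, y, z⟩ h1 h2
    rw [mem_trips] at h1 h2
    exact hne (huniq P hP Q hQ _ h1.2.1 h2.2.1)
  have step1 : Nat.card {π : Equiv.Perm (Fin (m+3)) //
      ∃ P ∈ D, Sym2.map π s(v,a) ∈ P ∧ Sym2.map π s(v,b) ∈ P}
      = (∑ P ∈ D, (trips P).card) * m.factorial := by
    rw [Nat.card_eq_fintype_card, Fintype.card_subtype]
    have hmaps : ∀ π ∈ Finset.univ.filter
        (fun π : Equiv.Perm (Fin (m+3)) =>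
          ∃ P ∈ D, Sym2.map π s(v,a) ∈ P ∧ Sym2.map π s(v,b) ∈ P),
        (π v, π a, π b) ∈ D.biUnion trips := by
      intro π hπ
      simp only [Finset.mem_filter, Finset.mem_univ, true_and] at hπ
      obtain ⟨P, hP, h1, h2⟩ := hπ
      rw [Sym2.map_pair_eq] at h1 h2
      exact Finset.mem_biUnion.mpr ⟨P, hP, mem_trips.mpr ⟨fun h => hab (π.injective h), h1, h2⟩⟩
    rw [Finset.card_eq_sum_card_fiberwise hmaps]
    have hfib : ∀ w ∈ D.biUnion trips,
        ((Finset.univ.filter (fun π : Equiv.Perm (Fin (m+3)) =>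
          ∃ P ∈ D, Sym2.map π s(v,a) ∈ P ∧ Sym2.map π s(v,b) ∈ P)).filter
            (fun π => (π v, π a, π b) = w)).card = m.factorial := by
      rintro ⟨x, y, z⟩ hw
      obtain ⟨P, hP, hwP⟩ := Finset.mem_biUnion.mp hw
      rw [mem_trips] at hwP
      obtain ⟨hyz, h1, h2⟩ := hwP
      have hxy : x ≠ y := by
        intro h; exact hnd P hP _ h1 (by simp [h, Sym2.mk_isDiag_iff])
      have hxz : x ≠ z := by
        intro h; exact hnd P hP _ h2 (by simp [h, Sym2.mk_isDiag_iff])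
      have hset : (Finset.univ.filter (fun π : Equiv.Perm (Fin (m+3)) =>
          ∃ P ∈ D, Sym2.map π s(v,a) ∈ P ∧ Sym2.map π s(v,b) ∈ P)).filter
            (fun π => (π v, π a, π b) = (x, y, z))
          = Finset.univ.filter (fun π : Equiv.Perm (Fin (m+3)) =>
              π v = x ∧ π a = y ∧ π b = z) := by
        rw [Finset.filter_filter]
        ext π
        simp only [Finset.mem_filter, Finset.mem_univ, true_and, Prod.mk.injEq]
        constructor
        · rintro ⟨-, hvx, hay, hbz⟩; exact ⟨hvx, hay, hbz⟩
        · rintro ⟨hvx, hay, hbz⟩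
          refine ⟨⟨P, hP, ?_, ?_⟩, hvx, hay, hbz⟩
          · rw [Sym2.map_pair_eq, hvx, hay]; exact h1
          · rw [Sym2.map_pair_eq, hvx, hbz]; exact h2
      rw [hset]
      exact card_fiber hva hvb hab hxy hxz hyz
    rw [Finset.sum_congr rfl hfib, Finset.sum_const, smul_eq_mul, Finset.card_biUnion hdisjt]
  -- Step 2 : total ordered-pair count
  have hdisjo : ∀ P ∈ D, ∀ Q ∈ D, P ≠ Q → Disjoint (opairs P) (opairs Q) := by
    intro P hP Q hQ hne
    rw [Finset.disjoint_left]
    rintro ⟨x, y⟩ h1 h2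
    exact hne (huniq P hP Q hQ _ (mem_opairs.mp h1) (mem_opairs.mp h2))
  have hsum_op : ∑ P ∈ D, (opairs P).card = (m+3)*(m+2) := by
    rw [← Finset.card_biUnion hdisjo]
    have hcover : D.biUnion opairs = (Finset.univ : Finset (Fin (m+3))).offDiag := by
      ext ⟨x, y⟩
      simp only [Finset.mem_biUnion, mem_opairs, Finset.mem_offDiag, Finset.mem_univ, true_and]
      constructor
      · rintro ⟨P, hP, h⟩ hxy
        exact hnd P hP _ h (by simp [hxy])
      · intro hxy
        obtain ⟨P, ⟨hP, hme⟩, -⟩ := hCov s(x,y) (by simp [Sym2.mk_isDiag_iff, hxy])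
        exact ⟨P, hP, hme⟩
    rw [hcover, Finset.offDiag_card, Finset.card_univ, Fintype.card_fin]
    have : (m+3)*(m+2) + (m+3) = (m+3)*(m+3) := by ring
    omega
  -- Step 3 : the main error identity
  set S : ℕ := ∑ P ∈ D, (trips P).card with hS
  have hKt : ∀ P ∈ D.filter (fun P => IsKClique (3+t') P),
      ((trips P).card : ℝ) - (1+(t':ℝ)) * (opairs P).card = 0 := by
    intro P hP
    rw [Finset.mem_filter] at hP
    obtain ⟨s, hs, rfl⟩ := hP.2
    have h1 : (trips (cliqueEdges s)).card = (3+t') * ((2+t') * (1+t')) := by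
      rw [trips_cliqueEdges, hs]
      congr 1
      have e1 : 3 + t' - 1 = 2 + t' := by omega
      have e2 : 3 + t' - 2 = 1 + t' := by omega
      rw [e1, e2]
    have h2 : (opairs (cliqueEdges s)).card = (3+t') * (2+t') := by
      rw [opairs_cliqueEdges, Finset.offDiag_card, hs]
      have : (3+t')*(2+t') + (3+t') = (3+t')*(3+t') := by ring
      omega
    rw [h1, h2]
    push_cast
    ring
  set DB := D.filter (fun P => ¬ IsKClique (3+t') P) with hDB
  have hE : (S : ℝ) - (1 + (t':ℝ)) * ((m+3)*(m+2))
      = ∑ P ∈ DB, (((trips P).card : ℝ) - (1+(t':ℝ)) * (opairs P).card) := by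
    have h0 : (S:ℝ) - (1+(t':ℝ))*((m+3)*(m+2))
        = ∑ P ∈ D, (((trips P).card : ℝ) - (1+(t':ℝ))*(opairs P).card) := by
      rw [Finset.sum_sub_distrib, ← Finset.mul_sum]
      have c1 : ((S:ℕ):ℝ) = ∑ P ∈ D, ((trips P).card : ℝ) := by
        rw [hS]; push_cast; ring
      have c2 : (∑ P ∈ D, ((opairs P).card : ℝ)) = ((m+3)*(m+2) : ℝ) := by
        have := congrArg (Nat.cast : ℕ → ℝ) hsum_op
        push_cast at this ⊢
        linarith [this]
      rw [c1, c2]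
    rw [h0, ← Finset.sum_filter_add_sum_filter_not D (fun P => IsKClique (3+t') P)]
    rw [Finset.sum_eq_zero hKt, zero_add]
  -- Step 4 : bound the error sum
  set g : Finset (Sym2 (Fin (m+3))) → ℝ :=
    fun P => ((trips P).card : ℝ) - (1+(t':ℝ)) * (opairs P).card with hg
  have hbound : |∑ P ∈ DB, g P|
      ≤ ((D.filter fun P => ¬ IsKClique (3+t') P ∧ IsKClique 3 P).card : ℝ) * (42 + 6*(t':ℝ))
        + ((t' : ℝ) * (72 + 8*(t':ℝ)) + (2+(t':ℝ)) * ((q:ℝ)*(q:ℝ) + (1+(t':ℝ))*(q:ℝ))) := by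
    have hr0 : (0:ℝ) ≤ (t':ℝ) := Nat.cast_nonneg _
    -- bound on K₃ members
    have hbd3 : ∀ P ∈ DB.filter (fun P => IsKClique 3 P), |g P| ≤ 42 + 6*(t':ℝ) := by
      intro P hP
      rw [Finset.mem_filter] at hP
      obtain ⟨s, hs, rfl⟩ := hP.2
      have hop : (opairs (cliqueEdges s)).card = 6 := by
        rw [opairs_cliqueEdges, Finset.offDiag_card, hs]
      have htr : (trips (cliqueEdges s)).card ≤ 36 := by
        have := trips_card_le (cliqueEdges s)
        rw [hop] at this
        omega
      have h0 : (0:ℝ) ≤ ((trips (cliqueEdges s)).card : ℝ) := Nat.cast_nonneg _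
      have h36 : ((trips (cliqueEdges s)).card : ℝ) ≤ 36 := by exact_mod_cast htr
      simp only [hg, hop]
      rw [abs_le]
      constructor <;> push_cast <;> nlinarith
    -- bound on C₄ members
    have hbd4 : ∀ P ∈ (DB.filter (fun P => ¬ IsKClique 3 P)).filter (fun P => IsC4 P),
        |g P| ≤ 72 + 8*(t':ℝ) := by
      intro P hP
      rw [Finset.mem_filter] at hP
      have hc4 : IsC4 P := hP.2
      have hop : (opairs P).card ≤ 8 := opairs_c4_le hc4
      have htr : (trips P).card ≤ 64 := by
        have := trips_card_le P
        have := Nat.mul_le_mul hop hop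
        omega
      have h0 : (0:ℝ) ≤ ((trips P).card : ℝ) := Nat.cast_nonneg _
      have h64 : ((trips P).card : ℝ) ≤ 64 := by exact_mod_cast htr
      have hop' : ((opairs P).card : ℝ) ≤ 8 := by exact_mod_cast hop
      have hop0 : (0:ℝ) ≤ ((opairs P).card : ℝ) := Nat.cast_nonneg _
      simp only [hg]
      rw [abs_le]
      constructor <;> nlinarith
    -- bound on K_{2t-1} members
    have hbd5 : ∀ P ∈ (DB.filter (fun P => ¬ IsKClique 3 P)).filter (fun P => ¬ IsC4 P),
        |g P| ≤ (q:ℝ)*(q:ℝ) + (1+(t':ℝ))*(q:ℝ) := by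
      intro P hP
      rw [Finset.mem_filter] at hP
      obtain ⟨⟨⟨hPD, hnKt⟩, hnK3⟩, hnC4⟩ :
          ((P ∈ D ∧ ¬ IsKClique (3+t') P) ∧ ¬ IsKClique 3 P) ∧ ¬ IsC4 P := by
        have h1 := hP.1
        rw [hDB, Finset.mem_filter, Finset.mem_filter] at h1
        exact ⟨⟨h1.1, h1.2⟩, hP.2⟩
      have hK : IsKClique (2*(3+t') - 1) P := by
        rcases hClass P hPD with h | h | h | h
        · exact absurd h hnKt
        · exact absurd h hnK3
        · exact absurd h hnC4
        · exact h
      obtain ⟨s, hs, rfl⟩ := hK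
      have hs' : s.card = 5 + 2*t' := by omega
      have hop : (opairs (cliqueEdges s)).card = q := by
        rw [opairs_cliqueEdges, Finset.offDiag_card, hs']
        have : q + (5+2*t') = (5+2*t')*(5+2*t') := by rw [hq]; ring
        omega
      have htr : (trips (cliqueEdges s)).card ≤ q*q := by
        have := trips_card_le (cliqueEdges s)
        rw [hop] at this
        exact this
      have h0 : (0:ℝ) ≤ ((trips (cliqueEdges s)).card : ℝ) := Nat.cast_nonneg _
      have hq0 : (0:ℝ) ≤ (q:ℝ) := Nat.cast_nonneg _
      have hqq : ((trips (cliqueEdges s)).card : ℝ) ≤ (q:ℝ)*(q:ℝ) := by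
        exact_mod_cast htr
      simp only [hg, hop]
      rw [abs_le]
      constructor <;> nlinarith
    calc |∑ P ∈ DB, g P| ≤ ∑ P ∈ DB, |g P| := Finset.abs_sum_le_sum_abs _ _
      _ = (∑ P ∈ DB.filter (fun P => IsKClique 3 P), |g P|)
          + ((∑ P ∈ (DB.filter (fun P => ¬ IsKClique 3 P)).filter (fun P => IsC4 P), |g P|)
          + (∑ P ∈ (DB.filter (fun P => ¬ IsKClique 3 P)).filter (fun P => ¬ IsC4 P), |g P|)) := by
        rw [← Finset.sum_filter_add_sum_filter_not DB (fun P => IsKClique 3 P)]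
        congr 1
        rw [← Finset.sum_filter_add_sum_filter_not (DB.filter (fun P => ¬ IsKClique 3 P))
          (fun P => IsC4 P)]
      _ ≤ ((D.filter fun P => ¬ IsKClique (3+t') P ∧ IsKClique 3 P).card : ℝ) * (42 + 6*(t':ℝ))
          + ((t' : ℝ) * (72 + 8*(t':ℝ))
            + (2+(t':ℝ)) * ((q:ℝ)*(q:ℝ) + (1+(t':ℝ))*(q:ℝ))) := by
        have e3 : DB.filter (fun P => IsKClique 3 P)
            = D.filter (fun P => ¬ IsKClique (3+t') P ∧ IsKClique 3 P) := by
          rw [hDB, Finset.filter_filter]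
        have t1 : (∑ P ∈ DB.filter (fun P => IsKClique 3 P), |g P|)
            ≤ ((D.filter fun P => ¬ IsKClique (3+t') P ∧ IsKClique 3 P).card : ℝ)
              * (42 + 6*(t':ℝ)) := by
          rw [← e3]
          have := Finset.sum_le_card_nsmul _ _ _ hbd3
          rwa [nsmul_eq_mul] at this
        have hc4card : ((DB.filter (fun P => ¬ IsKClique 3 P)).filter (fun P => IsC4 P)).card
            ≤ t' := by
          have hsub : (DB.filter (fun P => ¬ IsKClique 3 P)).filter (fun P => IsC4 P)
              ⊆ D.filter (fun P => ¬ IsKClique (3+t') P ∧ IsC4 P) := by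
            intro P hP
            rw [Finset.mem_filter] at hP
            have h1 := hP.1
            rw [Finset.mem_filter] at h1
            have h2 := h1.1
            rw [hDB, Finset.mem_filter] at h2
            exact Finset.mem_filter.mpr ⟨h2.1, h2.2, hP.2⟩
          have := (Finset.card_le_card hsub).trans hB4c
          omega
        have t2 : (∑ P ∈ (DB.filter (fun P => ¬ IsKClique 3 P)).filter (fun P => IsC4 P), |g P|)
            ≤ (t' : ℝ) * (72 + 8*(t':ℝ)) := by
          have h1 := Finset.sum_le_card_nsmul _ _ _ hbd4
          rw [nsmul_eq_mul] at h1
          refine h1.trans ?_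
          have : (((DB.filter (fun P => ¬ IsKClique 3 P)).filter (fun P => IsC4 P)).card : ℝ)
              ≤ (t' : ℝ) := by exact_mod_cast hc4card
          have hnn : (0:ℝ) ≤ 72 + 8*(t':ℝ) := by positivity
          nlinarith
        have hc5card : ((DB.filter (fun P => ¬ IsKClique 3 P)).filter (fun P => ¬ IsC4 P)).card
            ≤ 2 + t' := by
          have hsub : (DB.filter (fun P => ¬ IsKClique 3 P)).filter (fun P => ¬ IsC4 P)
              ⊆ D.filter (fun P => ¬ IsKClique (3+t') P ∧ IsKClique (2*(3+t') - 1) P) := by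
            intro P hP
            rw [Finset.mem_filter] at hP
            have h1 := hP.1
            rw [Finset.mem_filter] at h1
            have h2 := h1.1
            rw [hDB, Finset.mem_filter] at h2
            refine Finset.mem_filter.mpr ⟨h2.1, h2.2, ?_⟩
            rcases hClass P h2.1 with h | h | h | h
            · exact absurd h h2.2
            · exact absurd h h1.2
            · exact absurd h hP.2
            · exact h
          have := (Finset.card_le_card hsub).trans hB5c
          omega
        have t3 : (∑ P ∈ (DB.filter (fun P => ¬ IsKClique 3 P)).filter (fun P => ¬ IsC4 P), |g P|)
            ≤ (2+(t':ℝ)) * ((q:ℝ)*(q:ℝ) + (1+(t':ℝ))*(q:ℝ)) := by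
          have h1 := Finset.sum_le_card_nsmul _ _ _ hbd5
          rw [nsmul_eq_mul] at h1
          refine h1.trans ?_
          have hcc : (((DB.filter (fun P => ¬ IsKClique 3 P)).filter
              (fun P => ¬ IsC4 P)).card : ℝ) ≤ 2 + (t':ℝ) := by exact_mod_cast hc5card
          have hq0 : (0:ℝ) ≤ (q:ℝ) := Nat.cast_nonneg _
          have hnn : (0:ℝ) ≤ (q:ℝ)*(q:ℝ) + (1+(t':ℝ))*(q:ℝ) := by positivity
          nlinarith
        exact add_le_add t1 (add_le_add t2 t3)
  -- Step 5 : final assembly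
  have hr0 : (0:ℝ) ≤ (t':ℝ) := Nat.cast_nonneg _
  have hfact : ((m+3).factorial : ℝ)
      = (((m:ℝ)+3) * (((m:ℝ)+2) * ((m:ℝ)+1))) * (m.factorial : ℝ) := by
    have hnat : (m+3).factorial = (m+3) * ((m+2) * ((m+1) * m.factorial)) := rfl
    rw [hnat]
    push_cast
    ring
  have hmf0 : (m.factorial : ℝ) ≠ 0 := by positivity
  have hden : (0:ℝ) < ((m:ℝ)+3) * (((m:ℝ)+2) * ((m:ℝ)+1)) := by positivity
  rw [step1]
  have hSp : (((∑ P ∈ D, (trips P).card) * m.factorial : ℕ) : ℝ) / ((m+3).factorial : ℝ)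
      = (S:ℝ) / (((m:ℝ)+3) * (((m:ℝ)+2) * ((m:ℝ)+1))) := by
    have hcast : (((∑ P ∈ D, (trips P).card) * m.factorial : ℕ) : ℝ)
        = (m.factorial : ℝ) * (S:ℝ) := by rw [hS]; push_cast; ring
    rw [hcast, hfact, mul_comm (((m:ℝ)+3) * (((m:ℝ)+2) * ((m:ℝ)+1))) (m.factorial : ℝ)]
    rw [mul_div_mul_left _ _ hmf0]
  rw [hSp]
  have htarg : ((3 + (t':ℕ) : ℕ) : ℝ) - 2 = 1 + (t':ℝ) := by push_cast; ring
  have hm2 : ((m + 3 : ℕ) : ℝ) - 2 = (m:ℝ) + 1 := by push_cast; ring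
  rw [htarg, hm2]
  have hdiff : (S:ℝ) / (((m:ℝ)+3) * (((m:ℝ)+2) * ((m:ℝ)+1)))
      - (1 + (t':ℝ)) / ((m:ℝ)+1)
      = ((S:ℝ) - (1 + (t':ℝ)) * (((m:ℝ)+3)*((m:ℝ)+2)))
        / (((m:ℝ)+3) * (((m:ℝ)+2) * ((m:ℝ)+1))) := by
    field_simp
  rw [hdiff, abs_div, abs_of_pos hden, div_le_div_iff₀ hden (by positivity)]
  have hEbound : |(S:ℝ) - (1 + (t':ℝ)) * (((m:ℝ)+3)*((m:ℝ)+2))|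
      ≤ ((D.filter fun P => ¬ IsKClique (3+t') P ∧ IsKClique 3 P).card : ℝ) * (42 + 6*(t':ℝ))
        + (C:ℝ) := by
    have hCcast : (C:ℝ) = (t' : ℝ) * (72 + 8*(t':ℝ))
        + (2+(t':ℝ)) * ((q:ℝ)*(q:ℝ) + (1+(t':ℝ))*(q:ℝ)) := by
      rw [hC]; push_cast; ring
    rw [hE, hCcast]
    exact hbound
  set b3 : ℕ := (D.filter fun P => ¬ IsKClique (3+t') P ∧ IsKClique 3 P).card with hb3
  have hbc : (b3:ℝ) * 6 ≤ ((m:ℝ)+3) * (t':ℝ) := by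
    have : b3 * 6 ≤ (m+3) * t' := by
      have := hB3c
      have he' : 3 + t' - 3 = t' := by omega
      rw [he'] at this
      exact this
    exact_mod_cast this
  have hucast : (C:ℝ) + 9*(3+(t':ℝ))^2 + 10 ≤ (m:ℝ)+3 := by
    have hnn : C + 9*(3+t')^2 + 10 ≤ m + 3 := by
      have h9 : ((3+t')^2 : ℕ) = (3+t')^2 := rfl
      omega
    calc (C:ℝ) + 9*(3+(t':ℝ))^2 + 10 = ((C + 9*(3+t')^2 + 10 : ℕ) : ℝ) := by push_cast; ring
      _ ≤ ((m+3 : ℕ) : ℝ) := by exact_mod_cast hnn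
      _ = (m:ℝ)+3 := by push_cast; ring
  have hcr := crunch (t':ℝ) (C:ℝ) (b3:ℝ) ((m:ℝ)+3) hr0 (Nat.cast_nonneg _)
    (Nat.cast_nonneg _) hbc hucast
  have hgoalr : |(S:ℝ) - (1 + (t':ℝ)) * (((m:ℝ)+3)*((m:ℝ)+2))| * ((m:ℝ)+3)^2
      ≤ 3*(3+(t':ℝ))^2 * (((m:ℝ)+3) * (((m:ℝ)+2) * ((m:ℝ)+1))) := by
    have hsq : (0:ℝ) ≤ ((m:ℝ)+3)^2 := by positivity
    calc |(S:ℝ) - (1 + (t':ℝ)) * (((m:ℝ)+3)*((m:ℝ)+2))| * ((m:ℝ)+3)^2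
        ≤ ((b3:ℝ) * (42 + 6*(t':ℝ)) + (C:ℝ)) * ((m:ℝ)+3)^2 := by
          apply mul_le_mul_of_nonneg_right _ hsq
          exact hEbound
      _ ≤ 3*(3+(t':ℝ))^2 * (((m:ℝ)+3) * (((m:ℝ)+3)-1) * (((m:ℝ)+3)-2)) := hcr
      _ = 3*(3+(t':ℝ))^2 * (((m:ℝ)+3) * (((m:ℝ)+2) * ((m:ℝ)+1))) := by ring
  calc |(S:ℝ) - (1 + (t':ℝ)) * (((m:ℝ)+3)*((m:ℝ)+2))| * ((m + 3 : ℕ) : ℝ)^2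
      = |(S:ℝ) - (1 + (t':ℝ)) * (((m:ℝ)+3)*((m:ℝ)+2))| * ((m:ℝ)+3)^2 := by push_cast; ring
    _ ≤ 3*(3+(t':ℝ))^2 * (((m:ℝ)+3) * (((m:ℝ)+2) * ((m:ℝ)+1))) := hgoalr
    _ = 3 * ((3 + (t':ℕ) : ℕ) : ℝ)^2 * (((m:ℝ)+3) * (((m:ℝ)+2) * ((m:ℝ)+1))) := by
        push_cast; ring
end
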